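/- arXiv:1904.04225 — 9 statements merged into one kernel-verified Lean document; each statement's English description precedes it below -/
import Mathlib

section
/- For every K ≥ 1, α ∈ [0,1), λ ∈ [0,1] and x : Fin K → ℝ, the risk-adjusted value admits the dual representation ρ_λ(x) = min { ∑_{k} θ k · x k | θ : Fin K → ℝ, ∑_{k} θ k = 1, and for all k, λ/K ≤ θ k ≤ λ/K + (1−λ)/(K·(1−α)) }, and the minimum is attained. -/
open Finset

/-- Rockafellar–Uryasev representation of the (lower-tail) conditional value-at-risk
for `K` equally likely scenarios. -/
noncomputable def CVaR (K : ℕ) (α : ℝ) (x : Fin K → ℝ) : ℝ :=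
  sSup {v : ℝ | ∃ a : ℝ, v = a + (1 / (K * (1 - α))) * ∑ k, min (x k - a) 0}

/-- Risk-adjusted expected value: convex combination of expectation and CVaR. -/
noncomputable def riskAdj (K : ℕ) (α lam : ℝ) (x : Fin K → ℝ) : ℝ :=
  lam * ((1 / K) * ∑ k, x k) + (1 - lam) * CVaR K α x

lemma aux_term (C u t : ℝ) (hu0 : 0 ≤ u) (huC : u ≤ C) : C * min t 0 ≤ u * t := by
  rcases le_or_gt t 0 with h | h
  · rw [min_eq_left (by linarith)]
    exact mul_le_mul_of_nonpos_right huC h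
  · rw [min_eq_right h.le, mul_zero]
    positivity

lemma key_ineq (K : ℕ) (hK : 1 ≤ K) (α lam : ℝ) (x θ : Fin K → ℝ) (hθsum : ∑ k, θ k = 1)
    (hθ : ∀ k, lam / K ≤ θ k ∧ θ k ≤ lam / K + (1 - lam) / (K * (1 - α)))
    (a : ℝ) :
    (1 - lam) * (a + (1 / (K * (1 - α))) * ∑ k, min (x k - a) 0) ≤
      (∑ k, θ k * x k) - lam * ((1 / K) * ∑ k, x k) := by
  have hK0 : (0 : ℝ) < K := by exact_mod_cast Nat.lt_of_lt_of_le Nat.zero_lt_one hK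
  have per : ∀ k ∈ (univ : Finset (Fin K)),
      (1 - lam) * ((1 / (K * (1 - α))) * min (x k - a) 0) ≤ (θ k - lam / K) * (x k - a) := by
    intro k _
    have h1 := (hθ k).1
    have h2 := (hθ k).2
    have hb : θ k - lam / K ≤ (1 - lam) * (1 / (K * (1 - α))) := by
      have : (1 - lam) / (K * (1 - α)) = (1 - lam) * (1 / (K * (1 - α))) := by ring
      linarith [this ▸ h2]
    have := aux_term ((1 - lam) * (1 / (K * (1 - α)))) (θ k - lam / K) (x k - a)
      (by linarith) hb
    linarith [this, mul_assoc (1 - lam) (1 / ((K:ℝ) * (1 - α))) (min (x k - a) 0)]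
  have hsum := Finset.sum_le_sum per
  have hL : ∑ k, (1 - lam) * ((1 / ((K:ℝ) * (1 - α))) * min (x k - a) 0)
      = (1 - lam) * ((1 / (K * (1 - α))) * ∑ k, min (x k - a) 0) := by
    simp [Finset.mul_sum]
  have hR : ∑ k, (θ k - lam / K) * (x k - a)
      = (∑ k, θ k * x k) - a * (∑ k, θ k) - (lam / K) * (∑ k, x k)
        + (K : ℝ) * ((lam / K) * a) := by
    have h1 : ∀ k ∈ (univ : Finset (Fin K)), (θ k - lam / K) * (x k - a)
        = θ k * x k - a * θ k - ((lam / K) * x k - (lam / K) * a) := fun k _ => by ring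
    rw [Finset.sum_congr rfl h1, Finset.sum_sub_distrib, Finset.sum_sub_distrib,
      Finset.sum_sub_distrib, ← Finset.mul_sum, ← Finset.mul_sum, Finset.sum_const,
      Finset.card_univ, Fintype.card_fin, nsmul_eq_mul]
    ring
  rw [hL, hR, hθsum] at hsum
  have hKne : (K : ℝ) ≠ 0 := ne_of_gt hK0
  have e1 : (K : ℝ) * ((lam / K) * a) = lam * a := by field_simp
  have e2 : lam * ((1 / (K:ℝ)) * ∑ k, x k) = (lam / K) * ∑ k, x k := by ring
  nlinarith [hsum]

set_option maxHeartbeats 2000000 in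
/-- Dual representation of the risk-adjusted value: `ρ_λ(x)` is the attained minimum of
`∑ₖ θ k · x k` over weights `θ` summing to one with
`λ/K ≤ θ k ≤ λ/K + (1−λ)/(K·(1−α))` for every scenario `k`. -/
theorem riskAdj_dual_representation (K : ℕ) (hK : 1 ≤ K) (α : ℝ) (hα0 : 0 ≤ α) (hα1 : α < 1)
    (lam : ℝ) (hlam0 : 0 ≤ lam) (hlam1 : lam ≤ 1) (x : Fin K → ℝ) :
    IsLeast
      {v : ℝ | ∃ θ : Fin K → ℝ, (∑ k, θ k) = 1 ∧
        (∀ k, lam / K ≤ θ k ∧ θ k ≤ lam / K + (1 - lam) / (K * (1 - α))) ∧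
        v = ∑ k, θ k * x k}
      (riskAdj K α lam x) := by
  have hK0 : (0 : ℝ) < K := by exact_mod_cast Nat.lt_of_lt_of_le Nat.zero_lt_one hK
  have hKne : (K : ℝ) ≠ 0 := ne_of_gt hK0
  have h1α : (0 : ℝ) < 1 - α := by linarith
  have hKα : (0 : ℝ) < (K : ℝ) * (1 - α) := by positivity
  set c : ℝ := 1 / ((K : ℝ) * (1 - α)) with hc_def
  have hc : 0 < c := by positivity
  have hc1 : c * ((K : ℝ) * (1 - α)) = 1 := by
    rw [hc_def, one_div_mul_cancel (ne_of_gt hKα)]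
  -- the CVaR supremum set
  have Sne : {v : ℝ | ∃ a : ℝ, v = a + c * ∑ k, min (x k - a) 0}.Nonempty :=
    ⟨_, 0, rfl⟩
  have hCVaR : CVaR K α x = sSup {v : ℝ | ∃ a : ℝ, v = a + c * ∑ k, min (x k - a) 0} := rfl
  ----------------------------------------------------------------
  -- Construction of the optimal θ
  ----------------------------------------------------------------
  set m : ℕ := ⌈(K : ℝ) * (1 - α)⌉₊ with hm_def
  have hm_ge : (K : ℝ) * (1 - α) ≤ m := Nat.le_ceil _
  have hm_lt : (m : ℝ) < (K : ℝ) * (1 - α) + 1 := Nat.ceil_lt_add_one hKα.le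
  have hm1 : 1 ≤ m := by
    have := Nat.ceil_pos.mpr hKα
    omega
  have hmK : m ≤ K := by
    rw [hm_def]
    apply Nat.ceil_le.mpr
    nlinarith
  have hne : (univ : Finset (Fin K)).Nonempty := ⟨⟨0, hK⟩, mem_univ _⟩
  obtain ⟨kmax, -, hkmax⟩ := Finset.exists_max_image univ x hne
  have hG : (univ.filter fun k => m ≤ (univ.filter fun j => x j ≤ x k).card).Nonempty := by
    refine ⟨kmax, mem_filter.mpr ⟨mem_univ _, ?_⟩⟩
    have hfil : (univ.filter fun j => x j ≤ x kmax) = univ :=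
      Finset.filter_true_of_mem fun j _ => hkmax j (mem_univ j)
    rw [hfil, Finset.card_univ, Fintype.card_fin]
    exact hmK
  obtain ⟨k0, hk0G, hk0min⟩ := Finset.exists_min_image _ x hG
  set a := x k0 with ha_def
  have hA : m ≤ (univ.filter fun j => x j ≤ a).card := (mem_filter.mp hk0G).2
  have hBlt : (univ.filter fun j => x j < a).card < m := by
    by_contra hcon
    push_neg at hcon
    have hBne : (univ.filter fun j => x j < a).Nonempty :=
      Finset.card_pos.mp (by omega)
    obtain ⟨k1, hk1, hk1max⟩ := Finset.exists_max_image _ x hBne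
    have hk1a : x k1 < a := (mem_filter.mp hk1).2
    have hsub : (univ.filter fun j => x j < a) ⊆ (univ.filter fun j => x j ≤ x k1) :=
      fun j hj => mem_filter.mpr ⟨mem_univ _, hk1max j hj⟩
    have hmle : m ≤ (univ.filter fun j => x j ≤ x k1).card :=
      le_trans hcon (Finset.card_le_card hsub)
    have : a ≤ x k1 := hk0min k1 (mem_filter.mpr ⟨mem_univ _, hmle⟩)
    linarith
  set B := univ.filter fun j => x j < a with hB_def
  set T := univ.filter fun j => x j = a with hT_def
  have hBT : (univ.filter fun j => x j ≤ a) = B ∪ T := by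
    ext j
    simp [hB_def, hT_def, le_iff_lt_or_eq]
  have hdisj : Disjoint B T := by
    rw [Finset.disjoint_left]
    intro j hj1 hj2
    rw [hB_def, mem_filter] at hj1
    rw [hT_def, mem_filter] at hj2
    exact absurd hj1.2 (by rw [hj2.2]; exact lt_irrefl a)
  have hcard : (univ.filter fun j => x j ≤ a).card = B.card + T.card := by
    rw [hBT, Finset.card_union_of_disjoint hdisj]
  have htpos : 0 < T.card := by omega
  have hT0 : (T.card : ℝ) ≠ 0 := by positivity
  set r : ℝ := c * ((K : ℝ) * (1 - α) - B.card) with hr_def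
  have hr0 : 0 < r := by
    apply mul_pos hc
    have h1 : (B.card : ℝ) + 1 ≤ m := by exact_mod_cast hBlt
    linarith
  have hrt : r ≤ c * T.card := by
    rw [hr_def]
    apply mul_le_mul_of_nonneg_left _ hc.le
    have h1 : (m : ℝ) ≤ (B.card : ℝ) + (T.card : ℝ) := by exact_mod_cast hcard ▸ hA
    linarith
  have hr1 : r = 1 - c * B.card := by rw [hr_def]; linear_combination hc1
  set φ : Fin K → ℝ := fun k => if x k < a then c else if x k = a then r / T.card else 0
    with hφ_def
  have hφ0 : ∀ k, 0 ≤ φ k := by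
    intro k
    simp only [hφ_def]
    split_ifs with h1 h2
    · exact hc.le
    · positivity
    · exact le_refl 0
  have hφc : ∀ k, φ k ≤ c := by
    intro k
    simp only [hφ_def]
    split_ifs with h1 h2
    · exact le_refl c
    · rw [div_le_iff₀ (by positivity)]
      linarith [hrt]
    · exact hc.le
  -- split sums of the if-then-else form
  have hsplit : ∀ f g : Fin K → ℝ,
      (∑ k, if x k < a then f k else if x k = a then g k else 0)
        = (∑ k ∈ B, f k) + (∑ k ∈ T, g k) := by
    intro f g
    rw [Finset.sum_ite]
    congr 1
    rw [Finset.sum_ite, Finset.filter_filter, Finset.filter_filter]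
    have he1 : (univ.filter fun j => ¬x j < a ∧ x j = a) = T := by
      ext j
      simp only [hT_def, mem_filter, mem_univ, true_and, and_iff_right_iff_imp]
      intro h
      rw [h]
      exact lt_irrefl a
    rw [he1]
    simp
  have hφsum : ∑ k, φ k = 1 := by
    rw [hφ_def]
    rw [hsplit (fun _ => c) (fun _ => r / T.card), Finset.sum_const, Finset.sum_const,
      nsmul_eq_mul, nsmul_eq_mul]
    have h1 : (T.card : ℝ) * (r / T.card) = r := by field_simp
    rw [h1, hr1]
    ring
  have hTsum : ∑ k ∈ T, x k = (T.card : ℝ) * a := by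
    have : ∀ k ∈ T, x k = a := by
      intro k hk
      rw [hT_def, mem_filter] at hk
      exact hk.2
    rw [Finset.sum_congr rfl this, Finset.sum_const, nsmul_eq_mul]
  have hφx : ∑ k, φ k * x k = c * (∑ k ∈ B, x k) + r * a := by
    have h1 : ∀ k ∈ (univ : Finset (Fin K)), φ k * x k
        = if x k < a then c * x k else if x k = a then (r / T.card) * x k else 0 := by
      intro k _
      simp only [hφ_def]
      split_ifs with h1 h2 <;> ring
    rw [Finset.sum_congr rfl h1, hsplit (fun k => c * x k) (fun k => (r / T.card) * x k),
      ← Finset.mul_sum, ← Finset.mul_sum, hTsum]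
    field_simp
  have hmin : ∑ k, min (x k - a) 0 = ∑ k ∈ B, (x k - a) := by
    have h1 : ∀ k ∈ (univ : Finset (Fin K)), min (x k - a) 0
        = if x k < a then x k - a else 0 := by
      intro k _
      split_ifs with h
      · exact min_eq_left (by linarith)
      · exact min_eq_right (by linarith [not_lt.mp h])
    rw [Finset.sum_congr rfl h1, ← Finset.sum_filter]
  have hBsumc : ∑ k ∈ B, (x k - a) = (∑ k ∈ B, x k) - (B.card : ℝ) * a := by
    rw [Finset.sum_sub_distrib, Finset.sum_const, nsmul_eq_mul]
  -- the value at a equals ∑ φ x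
  have hVa : a + c * ∑ k, min (x k - a) 0 = ∑ k, φ k * x k := by
    rw [hmin, hBsumc, hφx, hr1]
    ring
  clear_value φ r c a B T m
  -- definition of θ
  set θ : Fin K → ℝ := fun k => lam / K + (1 - lam) * φ k with hθ_def
  have hθsum : ∑ k, θ k = 1 := by
    simp only [hθ_def]
    rw [Finset.sum_add_distrib, Finset.sum_const, Finset.card_univ, Fintype.card_fin,
      nsmul_eq_mul, ← Finset.mul_sum, hφsum]
    field_simp
    ring
  have hθbd : ∀ k, lam / K ≤ θ k ∧ θ k ≤ lam / K + (1 - lam) / (K * (1 - α)) := by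
    intro k
    constructor
    · simp only [hθ_def]
      nlinarith [hφ0 k]
    · simp only [hθ_def]
      have h1 : (1 - lam) * φ k ≤ (1 - lam) * c :=
        mul_le_mul_of_nonneg_left (hφc k) (by linarith)
      have h2 : (1 - lam) * c = (1 - lam) / ((K : ℝ) * (1 - α)) := by
        rw [hc_def]; ring
      linarith
  have hθx : ∑ k, θ k * x k
      = lam * ((1 / K) * ∑ k, x k) + (1 - lam) * (a + c * ∑ k, min (x k - a) 0) := by
    have h1 : ∀ k ∈ (univ : Finset (Fin K)), θ k * x k
        = (lam / K) * x k + (1 - lam) * (φ k * x k) := by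
      intro k _
      simp only [hθ_def]; ring
    rw [Finset.sum_congr rfl h1, Finset.sum_add_distrib, ← Finset.mul_sum, ← Finset.mul_sum,
      hVa]
    ring
  clear_value θ
  ----------------------------------------------------------------
  -- lower bound part
  ----------------------------------------------------------------
  have hlow : ∀ v ∈ {v : ℝ | ∃ θ' : Fin K → ℝ, (∑ k, θ' k) = 1 ∧
      (∀ k, lam / K ≤ θ' k ∧ θ' k ≤ lam / K + (1 - lam) / (K * (1 - α))) ∧
      v = ∑ k, θ' k * x k}, riskAdj K α lam x ≤ v := by
    rintro v ⟨θ', hθ'sum, hθ'bd, rfl⟩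
    have hkey := key_ineq K hK α lam x θ' hθ'sum hθ'bd
    rcases eq_or_lt_of_le hlam1 with heq | hlt
    · -- lam = 1
      have hθ'eq : ∀ k, θ' k = 1 / K := by
        intro k
        have h1 := (hθ'bd k).1
        have h2 := (hθ'bd k).2
        rw [heq] at h1 h2
        simp only [sub_self, zero_div] at h2
        linarith
      have : ∑ k, θ' k * x k = (1 / (K : ℝ)) * ∑ k, x k := by
        rw [Finset.sum_congr rfl fun k _ => by rw [hθ'eq k], ← Finset.mul_sum]
      unfold riskAdj
      rw [heq, this]
      linarith
    · -- lam < 1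
      have h1l : 0 < 1 - lam := by linarith
      have hCb : CVaR K α x ≤ ((∑ k, θ' k * x k) - lam * ((1 / K) * ∑ k, x k)) / (1 - lam) := by
        rw [hCVaR]
        apply csSup_le Sne
        rintro w ⟨a', rfl⟩
        rw [le_div_iff₀ h1l, hc_def]
        linarith [hkey a']
      unfold riskAdj
      have h3 := mul_le_mul_of_nonneg_left hCb h1l.le
      have h4 : (1 - lam) * (((∑ k, θ' k * x k) - lam * ((1 / K) * ∑ k, x k)) / (1 - lam))
          = (∑ k, θ' k * x k) - lam * ((1 / K) * ∑ k, x k) := by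
        field_simp
      linarith
  ----------------------------------------------------------------
  -- assemble
  ----------------------------------------------------------------
  have hmem_val : riskAdj K α lam x = ∑ k, θ k * x k := by
    have hub : riskAdj K α lam x ≤ ∑ k, θ k * x k :=
      hlow _ ⟨θ, hθsum, hθbd, rfl⟩
    have hlb : ∑ k, θ k * x k ≤ riskAdj K α lam x := by
      rcases eq_or_lt_of_le hlam1 with heq | hlt
      · -- lam = 1 : both sides equal the mean
        have hθeq : ∀ k, θ k = 1 / K := by
          intro k
          have h1 := (hθbd k).1
          have h2 := (hθbd k).2
          rw [heq] at h1 h2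
          simp only [sub_self, zero_div] at h2
          linarith
        have h5 : ∑ k, θ k * x k = (1 / (K : ℝ)) * ∑ k, x k := by
          rw [Finset.sum_congr rfl fun k _ => by rw [hθeq k], ← Finset.mul_sum]
        unfold riskAdj
        rw [heq, h5]
        linarith
      · have h1l : 0 < 1 - lam := by linarith
        -- BddAbove
        have hbdd : BddAbove {v : ℝ | ∃ a' : ℝ, v = a' + c * ∑ k, min (x k - a') 0} := by
          refine ⟨((∑ k, θ k * x k) - lam * ((1 / K) * ∑ k, x k)) / (1 - lam), ?_⟩
          rintro w ⟨a', rfl⟩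
          rw [le_div_iff₀ h1l, hc_def]
          linarith [key_ineq K hK α lam x θ hθsum hθbd a']
        have hVaC : a + c * ∑ k, min (x k - a) 0 ≤ CVaR K α x := by
          rw [hCVaR]
          exact le_csSup hbdd ⟨a, rfl⟩
        unfold riskAdj
        rw [hθx]
        nlinarith [hVaC, h1l]
    linarith
  constructor
  · exact ⟨θ, hθsum, hθbd, hmem_val⟩
  · exact hlow
end

section
/- Suppose q⁰ ≥ 0 maximizes the total welfare W(q) = ρ_{λg}(fun k => (g k − q)·π k) + ρ_{λd}(fun k => (q − d k)·π k) over q ≥ 0. Then there exists a contract price p⁰ ∈ ℝ such that (p⁰, q⁰) is a competitive equilibrium: q⁰ maximizes ρ_{λg}(fun k => (g k − q)·π k) + q·p⁰ over q ≥ 0 and q⁰ maximizes ρ_{λd}(fun k => (q − d k)·π k) − q·p⁰ over q ≥ 0. (p⁰ is the dual multiplier of the market-clearing constraint q_s = q_b in the welfare LP.) -/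
open Finset

private lemma min_comb {t u v : ℝ} (ht0 : 0 ≤ t) (ht1 : t ≤ 1) :
    t * min u 0 + (1 - t) * min v 0 ≤ min (t * u + (1 - t) * v) 0 := by
  have h1 : (0:ℝ) ≤ 1 - t := by linarith
  refine le_min ?_ ?_
  · have a1 := mul_le_mul_of_nonneg_left (min_le_left u 0) ht0
    have a2 := mul_le_mul_of_nonneg_left (min_le_left v 0) h1
    linarith
  · have a1 := mul_le_mul_of_nonneg_left (min_le_right u 0) ht0
    have a2 := mul_le_mul_of_nonneg_left (min_le_right v 0) h1
    linarith

private lemma cvar_set_nonempty (K : ℕ) (α : ℝ) (x : Fin K → ℝ) :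
    {v : ℝ | ∃ a : ℝ, v = a + (1 / (K * (1 - α))) * ∑ k, min (x k - a) 0}.Nonempty :=
  ⟨_, ⟨0, rfl⟩⟩

private lemma cvar_set_bddAbove (K : ℕ) (hK : 1 ≤ K) {α : ℝ} (hα0 : 0 ≤ α) (hα1 : α < 1)
    (x : Fin K → ℝ) :
    BddAbove {v : ℝ | ∃ a : ℝ, v = a + (1 / (K * (1 - α))) * ∑ k, min (x k - a) 0} := by
  set c : ℝ := 1 / (K * (1 - α)) with hc
  have hK1 : (1:ℝ) ≤ K := by exact_mod_cast hK
  have hKpos : (0:ℝ) < K := by linarith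
  have hα : (0:ℝ) < 1 - α := by linarith
  have hcpos : 0 < c := by rw [hc]; positivity
  have hcK : 1 ≤ c * K := by
    have h1 : c * K = 1 / (1 - α) := by rw [hc]; field_simp
    rw [h1, le_div_iff₀ hα]; linarith
  refine ⟨max 0 (c * ∑ k, x k), ?_⟩
  rintro v ⟨a, rfl⟩
  set S := ∑ k, min (x k - a) 0 with hS
  have hS0 : S ≤ 0 := Finset.sum_nonpos fun k _ => min_le_right _ _
  have hS1 : S ≤ (∑ k, x k) - K * a := by
    have := Finset.sum_le_sum (fun k (_ : k ∈ Finset.univ) => min_le_left (x k - a) 0)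
    simpa [hS, Finset.sum_sub_distrib, Finset.card_fin, mul_comm] using this
  rcases le_or_gt a 0 with ha | ha
  · have : c * S ≤ 0 := mul_nonpos_of_nonneg_of_nonpos hcpos.le hS0
    have : a + c * S ≤ 0 := by linarith
    exact le_trans this (le_max_left _ _)
  · have h2 : c * S ≤ c * ((∑ k, x k) - K * a) := mul_le_mul_of_nonneg_left hS1 hcpos.le
    have h3 : a + c * S ≤ c * ∑ k, x k := by nlinarith
    exact le_trans h3 (le_max_right _ _)

private lemma cvar_concave (K : ℕ) (hK : 1 ≤ K) {α : ℝ} (hα0 : 0 ≤ α) (hα1 : α < 1)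
    (x y : Fin K → ℝ) {t : ℝ} (ht0 : 0 ≤ t) (ht1 : t ≤ 1) :
    t * CVaR K α x + (1 - t) * CVaR K α y ≤ CVaR K α (fun k => t * x k + (1 - t) * y k) := by
  classical
  set c : ℝ := 1 / (K * (1 - α)) with hc
  have hK1 : (1:ℝ) ≤ K := by exact_mod_cast hK
  have hα : (0:ℝ) < 1 - α := by linarith
  have hcpos : (0:ℝ) ≤ c := by rw [hc]; positivity
  refine le_of_forall_pos_le_add fun ε hε => ?_
  obtain ⟨u, humem, hu⟩ := exists_lt_of_lt_csSup (cvar_set_nonempty K α x)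
    (sub_lt_self (CVaR K α x) hε)
  obtain ⟨a, rfl⟩ := humem
  obtain ⟨v, hvmem, hv⟩ := exists_lt_of_lt_csSup (cvar_set_nonempty K α y)
    (sub_lt_self (CVaR K α y) hε)
  obtain ⟨b, rfl⟩ := hvmem
  set cc : ℝ := t * a + (1 - t) * b with hcc
  have hmem : cc + c * ∑ k, min ((t * x k + (1 - t) * y k) - cc) 0 ∈
      {w : ℝ | ∃ a' : ℝ, w = a' + (1 / (K * (1 - α))) *
        ∑ k, min ((fun k => t * x k + (1 - t) * y k) k - a') 0} := ⟨cc, by rw [hc]⟩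
  have hterm : ∀ k ∈ Finset.univ,
      t * min (x k - a) 0 + (1 - t) * min (y k - b) 0 ≤
        min ((t * x k + (1 - t) * y k) - cc) 0 := by
    intro k _
    have heq : (t * x k + (1 - t) * y k) - cc = t * (x k - a) + (1 - t) * (y k - b) := by
      rw [hcc]; ring
    rw [heq]
    exact min_comb ht0 ht1
  have hsum := Finset.sum_le_sum hterm
  rw [Finset.sum_add_distrib, ← Finset.mul_sum, ← Finset.mul_sum] at hsum
  have hkey : t * (a + c * ∑ k, min (x k - a) 0) + (1 - t) * (b + c * ∑ k, min (y k - b) 0) ≤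
      cc + c * ∑ k, min ((t * x k + (1 - t) * y k) - cc) 0 := by
    have h2 := mul_le_mul_of_nonneg_left hsum hcpos
    have h3 : t * (a + c * ∑ k, min (x k - a) 0) + (1 - t) * (b + c * ∑ k, min (y k - b) 0)
        = cc + c * (t * ∑ k, min (x k - a) 0 + (1 - t) * ∑ k, min (y k - b) 0) := by
      rw [hcc]; ring
    rw [h3]; linarith
  have hle : cc + c * ∑ k, min ((t * x k + (1 - t) * y k) - cc) 0 ≤
      CVaR K α (fun k => t * x k + (1 - t) * y k) := by
    rw [CVaR] at *
    exact le_csSup (cvar_set_bddAbove K hK hα0 hα1 _) hmem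
  have h4 := mul_le_mul_of_nonneg_left hu.le ht0
  have h5 := mul_le_mul_of_nonneg_left hv.le (by linarith : (0:ℝ) ≤ 1 - t)
  nlinarith

private lemma riskAdj_concave (K : ℕ) (hK : 1 ≤ K) {α : ℝ} (hα0 : 0 ≤ α) (hα1 : α < 1)
    {lam : ℝ} (hlam : lam ≤ 1) (x y : Fin K → ℝ) {t : ℝ} (ht0 : 0 ≤ t) (ht1 : t ≤ 1) :
    t * riskAdj K α lam x + (1 - t) * riskAdj K α lam y ≤
      riskAdj K α lam (fun k => t * x k + (1 - t) * y k) := by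
  have hsum : ∑ k, (t * x k + (1 - t) * y k) = t * ∑ k, x k + (1 - t) * ∑ k, y k := by
    rw [Finset.sum_add_distrib, ← Finset.mul_sum, ← Finset.mul_sum]
  have hcv := cvar_concave K hK hα0 hα1 x y ht0 ht1
  have h2 := mul_le_mul_of_nonneg_left hcv (by linarith : (0:ℝ) ≤ 1 - lam)
  simp only [riskAdj, hsum]
  nlinarith

/-- Welfare maximum implies equilibrium: if `q⁰ ≥ 0` maximizes total welfare over `q ≥ 0`,
then there exists a contract price `p⁰` (the dual multiplier of the market-clearing
constraint in the welfare LP) such that `(p⁰, q⁰)` is a competitive equilibrium. -/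
theorem welfare_maximum_yields_equilibrium_price (K : ℕ) (hK : 1 ≤ K)
    (α : ℝ) (hα0 : 0 ≤ α) (hα1 : α < 1)
    (lamg lamd : ℝ) (hlamg : 0 ≤ lamg ∧ lamg ≤ 1) (hlamd : 0 ≤ lamd ∧ lamd ≤ 1)
    (g d π : Fin K → ℝ) (q₀ : ℝ) (hq₀ : 0 ≤ q₀)
    (hwelf : ∀ q : ℝ, 0 ≤ q →
      riskAdj K α lamg (fun k => (g k - q) * π k) +
          riskAdj K α lamd (fun k => (q - d k) * π k) ≤
        riskAdj K α lamg (fun k => (g k - q₀) * π k) +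
          riskAdj K α lamd (fun k => (q₀ - d k) * π k)) :
    ∃ p₀ : ℝ,
      (∀ q : ℝ, 0 ≤ q →
        riskAdj K α lamg (fun k => (g k - q) * π k) + q * p₀ ≤
          riskAdj K α lamg (fun k => (g k - q₀) * π k) + q₀ * p₀) ∧
      (∀ q : ℝ, 0 ≤ q →
        riskAdj K α lamd (fun k => (q - d k) * π k) - q * p₀ ≤
          riskAdj K α lamd (fun k => (q₀ - d k) * π k) - q₀ * p₀) := by
  classical
  set φg : ℝ → ℝ := fun q => riskAdj K α lamg (fun k => (g k - q) * π k) with hφg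
  set φd : ℝ → ℝ := fun q => riskAdj K α lamd (fun k => (q - d k) * π k) with hφd
  -- concavity of φg and φd
  have hconcg : ConcaveOn ℝ Set.univ φg := by
    refine ⟨convex_univ, fun a _ b _ s r hs hr hsr => ?_⟩
    have hr' : r = 1 - s := by linarith
    have key := riskAdj_concave K hK hα0 hα1 hlamg.2 (fun k => (g k - a) * π k)
      (fun k => (g k - b) * π k) hs (by linarith)
    have hfeq : (fun k => (g k - (s * a + (1 - s) * b)) * π k) =
        (fun k => s * ((g k - a) * π k) + (1 - s) * ((g k - b) * π k)) := by
      funext k; ring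
    simp only [hφg, smul_eq_mul, hr']
    rw [hfeq]
    simpa using key
  have hconcd : ConcaveOn ℝ Set.univ φd := by
    refine ⟨convex_univ, fun a _ b _ s r hs hr hsr => ?_⟩
    have hr' : r = 1 - s := by linarith
    have key := riskAdj_concave K hK hα0 hα1 hlamd.2 (fun k => (a - d k) * π k)
      (fun k => (b - d k) * π k) hs (by linarith)
    have hfeq : (fun k => ((s * a + (1 - s) * b) - d k) * π k) =
        (fun k => s * ((a - d k) * π k) + (1 - s) * ((b - d k) * π k)) := by
      funext k; ring
    simp only [hφd, smul_eq_mul, hr']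
    rw [hfeq]
    simpa using key
  -- secant slope functions (based at q₀)
  set sg : ℝ → ℝ := fun q => (φg q - φg q₀) / (q - q₀) with hsg
  set sd : ℝ → ℝ := fun q => (φd q - φd q₀) / (q - q₀) with hsd
  have hgsec : ∀ {a b : ℝ}, a ≠ q₀ → b ≠ q₀ → a ≤ b → sg b ≤ sg a := by
    intro a b ha hb hab
    have hcv : ConvexOn ℝ Set.univ (-φg) := neg_convexOn_iff.mpr hconcg
    have := hcv.secant_mono (Set.mem_univ q₀) (Set.mem_univ a) (Set.mem_univ b) ha hb hab
    simp only [Pi.neg_apply, hsg] at this ⊢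
    have h1 : (-φg a - -φg q₀) / (a - q₀) = -((φg a - φg q₀) / (a - q₀)) := by ring
    have h2 : (-φg b - -φg q₀) / (b - q₀) = -((φg b - φg q₀) / (b - q₀)) := by ring
    rw [h1, h2] at this
    linarith
  have hdsec : ∀ {a b : ℝ}, a ≠ q₀ → b ≠ q₀ → a ≤ b → sd b ≤ sd a := by
    intro a b ha hb hab
    have hcv : ConvexOn ℝ Set.univ (-φd) := neg_convexOn_iff.mpr hconcd
    have := hcv.secant_mono (Set.mem_univ q₀) (Set.mem_univ a) (Set.mem_univ b) ha hb hab
    simp only [Pi.neg_apply, hsd] at this ⊢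
    have h1 : (-φd a - -φd q₀) / (a - q₀) = -((φd a - φd q₀) / (a - q₀)) := by ring
    have h2 : (-φd b - -φd q₀) / (b - q₀) = -((φd b - φd q₀) / (b - q₀)) := by ring
    rw [h1, h2] at this
    linarith
  -- welfare optimality in slope form
  have hwup : ∀ {q : ℝ}, q₀ < q → sg q + sd q ≤ 0 := by
    intro q hq
    have h := hwelf q (le_trans hq₀ hq.le)
    have hpos : 0 < q - q₀ := by linarith
    have : sg q + sd q = ((φg q + φd q) - (φg q₀ + φd q₀)) / (q - q₀) := by
      simp only [hsg, hsd]; ring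
    rw [this]
    exact div_nonpos_of_nonpos_of_nonneg (by simp only [hφg, hφd]; linarith) hpos.le
  have hwdown : ∀ {q : ℝ}, 0 ≤ q → q < q₀ → 0 ≤ sg q + sd q := by
    intro q hq0 hq
    have h := hwelf q hq0
    have hneg : q - q₀ < 0 := by linarith
    have : sg q + sd q = ((φg q + φd q) - (φg q₀ + φd q₀)) / (q - q₀) := by
      simp only [hsg, hsd]; ring
    rw [this]
    exact div_nonneg_iff.mpr (Or.inr ⟨by simp only [hφg, hφd]; linarith, hneg.le⟩)
  -- cross inequalities between slope bounds
  have hb : ∀ {q q' : ℝ}, q₀ < q → q₀ < q' → sd q ≤ -sg q' := by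
    intro q q' hq hq'
    rcases le_total q q' with h | h
    · have h1 : sg q' ≤ sg q := hgsec hq.ne' hq'.ne' h
      have h2 := hwup hq
      linarith
    · have h1 : sd q ≤ sd q' := hdsec hq'.ne' hq.ne' h
      have h2 := hwup hq'
      linarith
  have hc : ∀ {q q' : ℝ}, 0 ≤ q → q < q₀ → 0 ≤ q' → q' < q₀ → -sg q ≤ sd q' := by
    intro q q' hq0 hq hq'0 hq'
    rcases le_total q q' with h | h
    · have h1 : sg q' ≤ sg q := hgsec (ne_of_lt hq) (ne_of_lt hq') h
      have h2 := hwdown hq'0 hq'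
      linarith
    · have h1 : sd q ≤ sd q' := hdsec (ne_of_lt hq') (ne_of_lt hq) h
      have h2 := hwdown hq0 hq
      linarith
  have ha : ∀ {q q' : ℝ}, q < q₀ → q₀ < q' → sd q' ≤ sd q :=
    fun hq hq' => hdsec (ne_of_lt hq) hq'.ne' (le_of_lt (lt_trans hq hq'))
  have hd : ∀ {q q' : ℝ}, q < q₀ → q₀ < q' → -sg q ≤ -sg q' := by
    intro q q' hq hq'
    have := hgsec (ne_of_lt hq) hq'.ne' (le_of_lt (lt_trans hq hq'))
    linarith
  -- the candidate price: sup of lower slope bounds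
  set L : Set ℝ := {v | ∃ q, q₀ < q ∧ v = sd q} ∪ {v | ∃ q, 0 ≤ q ∧ q < q₀ ∧ v = -sg q}
    with hL
  have hub1 : ∀ {q' : ℝ}, q₀ < q' → (-sg q') ∈ upperBounds L := by
    intro q' hq'
    rintro v (⟨q, hq, rfl⟩ | ⟨q, hq0, hq, rfl⟩)
    · exact hb hq hq'
    · exact hd hq hq'
  have hub2 : ∀ {q' : ℝ}, 0 ≤ q' → q' < q₀ → (sd q') ∈ upperBounds L := by
    intro q' hq'0 hq'
    rintro v (⟨q, hq, rfl⟩ | ⟨q, hq0, hq, rfl⟩)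
    · exact ha hq' hq
    · exact hc hq0 hq hq'0 hq'
  have hLne : L.Nonempty := ⟨sd (q₀ + 1), Or.inl ⟨q₀ + 1, by linarith, rfl⟩⟩
  have hLbdd : BddAbove L := ⟨-sg (q₀ + 1), hub1 (by linarith)⟩
  set p₀ := sSup L with hp₀
  have P1 : ∀ {q : ℝ}, q₀ < q → sd q ≤ p₀ :=
    fun hq => le_csSup hLbdd (Or.inl ⟨_, hq, rfl⟩)
  have P2 : ∀ {q : ℝ}, 0 ≤ q → q < q₀ → -sg q ≤ p₀ :=
    fun hq0 hq => le_csSup hLbdd (Or.inr ⟨_, hq0, hq, rfl⟩)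
  have P3 : ∀ {q : ℝ}, q₀ < q → p₀ ≤ -sg q :=
    fun hq => csSup_le hLne (hub1 hq)
  have P4 : ∀ {q : ℝ}, 0 ≤ q → q < q₀ → p₀ ≤ sd q :=
    fun hq0 hq => csSup_le hLne (hub2 hq0 hq)
  refine ⟨p₀, fun q hq => ?_, fun q hq => ?_⟩
  · -- generator
    rcases lt_trichotomy q q₀ with hlt | heq | hgt
    · have h := P2 hq hlt
      have hpos : 0 < q₀ - q := by linarith
      have h2 : (φg q - φg q₀) / (q₀ - q) ≤ p₀ := by
        have hrw : -sg q = (φg q - φg q₀) / (q₀ - q) := by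
          simp only [hsg]; rw [show q₀ - q = -(q - q₀) by ring, div_neg]
        rw [← hrw]; exact h
      have h3 := (div_le_iff₀ hpos).mp h2
      show φg q + q * p₀ ≤ φg q₀ + q₀ * p₀
      linarith
    · rw [heq]
    · have h := P3 hgt
      have hpos : 0 < q - q₀ := by linarith
      have h2 : (φg q - φg q₀) / (q - q₀) ≤ -p₀ := by
        have h' : sg q ≤ -p₀ := by linarith
        exact h'
      have h3 := (div_le_iff₀ hpos).mp h2
      show φg q + q * p₀ ≤ φg q₀ + q₀ * p₀
      nlinarith
  · -- load
    rcases lt_trichotomy q q₀ with hlt | heq | hgt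
    · have h := P4 hq hlt
      have hpos : 0 < q₀ - q := by linarith
      have h2 : p₀ ≤ (φd q₀ - φd q) / (q₀ - q) := by
        have hrw : sd q = (φd q₀ - φd q) / (q₀ - q) := by
          simp only [hsd]
          rw [show q₀ - q = -(q - q₀) by ring,
            show φd q₀ - φd q = -(φd q - φd q₀) by ring, neg_div_neg_eq]
        rw [← hrw]; exact h
      have h3 := (le_div_iff₀ hpos).mp h2
      show φd q - q * p₀ ≤ φd q₀ - q₀ * p₀
      nlinarith
    · rw [heq]
    · have h := P1 hgt
      have hpos : 0 < q - q₀ := by linarith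
      have h2 : (φd q - φd q₀) / (q - q₀) ≤ p₀ := h
      have h3 := (div_le_iff₀ hpos).mp h2
      show φd q - q * p₀ ≤ φd q₀ - q₀ * p₀
      nlinarith
end

section
/- Suppose (p⁰, q⁰) is a competitive equilibrium with strictly positive traded quantity q⁰ > 0 (q⁰ maximizes ρ_{λg}(fun k => (g k − q)·π k) + q·p⁰ over q ≥ 0 and maximizes ρ_{λd}(fun k => (q − d k)·π k) − q·p⁰ over q ≥ 0). Then there exist weights θ : Fin K → ℝ with ∑_{k} θ k = 1 and λg/K ≤ θ k ≤ λg/K + (1−λg)/(K·(1−α)) for all k such that p⁰ = ∑_{k} θ k · π k, and likewise there exist weights θ' : Fin K → ℝ with ∑_{k} θ' k = 1 and λd/K ≤ θ' k ≤ λd/K + (1−λd)/(K·(1−α)) for all k such that p⁰ = ∑_{k} θ' k · π k. That is, the equilibrium forward price is a risk-adjusted expectation of the spot prices for both agents. -/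
open Finset

lemma cvar_le_dot (K : ℕ) (α : ℝ) (x θ : Fin K → ℝ)
    (h0 : ∀ k, 0 ≤ θ k) (hc : ∀ k, θ k ≤ 1 / (K * (1 - α)))
    (hsum : ∑ k, θ k = 1) :
    CVaR K α x ≤ ∑ k, θ k * x k := by
  have hne : {v : ℝ | ∃ a : ℝ, v = a + (1 / (K * (1 - α))) * ∑ k, min (x k - a) 0}.Nonempty :=
    ⟨_, 0, rfl⟩
  apply csSup_le hne
  rintro v ⟨a, rfl⟩
  have h1 : (1 / (K * (1 - α))) * ∑ k, min (x k - a) 0 ≤ ∑ k, θ k * min (x k - a) 0 := by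
    rw [Finset.mul_sum]
    apply Finset.sum_le_sum
    intro k _
    exact mul_le_mul_of_nonpos_right (hc k) (min_le_right _ _)
  have h2 : ∑ k, θ k * min (x k - a) 0 ≤ ∑ k, θ k * (x k - a) := by
    apply Finset.sum_le_sum
    intro k _
    exact mul_le_mul_of_nonneg_left (min_le_left _ _) (h0 k)
  have h3 : ∑ k, θ k * (x k - a) = (∑ k, θ k * x k) - a := by
    have : ∀ k ∈ Finset.univ, θ k * (x k - a) = θ k * x k - a * θ k := by intros; ring
    rw [Finset.sum_congr rfl this, Finset.sum_sub_distrib, ← Finset.mul_sum, hsum]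
    ring
  linarith


lemma exists_cvar_attain (K : ℕ) (hK : 1 ≤ K) (α : ℝ) (hα0 : 0 ≤ α) (hα1 : α < 1)
    (x : Fin K → ℝ) :
    ∃ θ : Fin K → ℝ, (∑ k, θ k) = 1 ∧ (∀ k, 0 ≤ θ k ∧ θ k ≤ 1 / (K * (1 - α))) ∧
      (∑ k, θ k * x k) ≤ CVaR K α x := by
  have hKpos : (0:ℝ) < K := by exact_mod_cast hK
  have hα1' : (0:ℝ) < 1 - α := by linarith
  have hm : (0:ℝ) < (K : ℝ) * (1 - α) := mul_pos hKpos hα1'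
  have hmK : (K:ℝ) * (1 - α) ≤ K := by nlinarith
  set m : ℝ := (K : ℝ) * (1 - α) with hm_def
  set c : ℝ := 1 / m with hc_def
  have hc : 0 < c := by positivity
  have hcm : c * m = 1 := by
    rw [hc_def]; field_simp
  set j : ℕ := ⌈m⌉₊ with hj_def
  have hj1 : 1 ≤ j := Nat.ceil_pos.mpr hm
  have hjK : j ≤ K := Nat.ceil_le.mpr (by exact_mod_cast hmK)
  have hjm : (j:ℝ) ≤ m + 1 := (Nat.ceil_lt_add_one hm.le).le
  have hmj : m ≤ (j:ℝ) := Nat.le_ceil m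
  set σ := Tuple.sort x with hσ
  set y : Fin K → ℝ := x ∘ σ with hy
  have hmono : Monotone y := Tuple.monotone_sort x
  set i₀ : Fin K := ⟨j - 1, by omega⟩ with hi₀
  have hcard : (Finset.Iio i₀).card = j - 1 := by rw [Fin.card_Iio]
  have hjcast : ((j - 1 : ℕ) : ℝ) = (j : ℝ) - 1 := by
    push_cast [Nat.cast_sub hj1]; ring
  set w : ℝ := 1 - c * ((j:ℝ) - 1) with hw
  have hw0 : 0 ≤ w := by
    rw [hw]
    have : c * ((j:ℝ) - 1) ≤ c * m := by
      apply mul_le_mul_of_nonneg_left (by linarith) hc.le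
    rw [hcm] at this
    linarith
  have hwc : w ≤ c := by
    rw [hw]
    have : c * m ≤ c * (j:ℝ) := mul_le_mul_of_nonneg_left hmj hc.le
    rw [hcm] at this
    nlinarith
  set η : Fin K → ℝ := fun i => if i < i₀ then c else if i = i₀ then w else 0 with hη
  set a : ℝ := y i₀ with ha
  have hsplit : ∀ (f : Fin K → ℝ), ∑ i, η i * f i = c * (∑ i ∈ Finset.Iio i₀, f i) + w * f i₀ := by
    intro f
    have key : ∀ i ∈ Finset.univ, η i * f i =
        (if i ∈ Finset.Iio i₀ then c * f i else 0) + (if i = i₀ then w * f i else 0) := by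
      intro i _
      show (if i < i₀ then c else if i = i₀ then w else 0) * f i =
        (if i ∈ Finset.Iio i₀ then c * f i else 0) + (if i = i₀ then w * f i else 0)
      simp only [Finset.mem_Iio]
      split_ifs with h1 h2 <;> try ring
      exact absurd (h2 ▸ h1) (lt_irrefl i₀)
    rw [Finset.sum_congr rfl key, Finset.sum_add_distrib,
      Finset.sum_ite_mem, Finset.univ_inter, ← Finset.mul_sum,
      Finset.sum_ite_eq' Finset.univ i₀ (fun i => w * f i)]
    simp
  have hηsum : ∑ i, η i = 1 := by
    have h := hsplit (fun _ => (1:ℝ))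
    simp only [mul_one, Finset.sum_const, nsmul_eq_mul] at h
    rw [hcard, hjcast] at h
    rw [h, hw]; ring
  have hmin : ∀ i, min (y i - a) 0 = if i ∈ Finset.Iio i₀ then y i - a else 0 := by
    intro i
    by_cases h : i ∈ Finset.Iio i₀
    · rw [if_pos h]
      apply min_eq_left
      have : y i ≤ y i₀ := hmono (Finset.mem_Iio.mp h).le
      linarith
    · rw [if_neg h]
      apply min_eq_right
      have : a ≤ y i := hmono (not_lt.mp (fun hlt => h (Finset.mem_Iio.mpr hlt)))
      linarith
  have hattain : ∑ i, η i * y i = a + c * ∑ i, min (y i - a) 0 := by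
    rw [hsplit y, Finset.sum_congr rfl (fun i _ => hmin i), Finset.sum_ite_mem,
      Finset.univ_inter, Finset.sum_sub_distrib, Finset.sum_const, hcard, nsmul_eq_mul, hjcast,
      hw]
    ring
  refine ⟨fun k => η (σ.symm k), ?_, ?_, ?_⟩
  · rw [← hηsum]
    exact Equiv.sum_comp σ.symm η
  · intro k
    have hcc : c = 1 / ((K:ℝ) * (1 - α)) := by rw [hc_def, hm_def]
    constructor
    · show (0:ℝ) ≤ if σ.symm k < i₀ then c else if σ.symm k = i₀ then w else 0
      split_ifs <;> [exact hc.le; exact hw0; exact le_refl 0]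
    · show (if σ.symm k < i₀ then c else if σ.symm k = i₀ then w else 0) ≤ 1 / ((K:ℝ) * (1 - α))
      rw [← hcc]
      split_ifs <;> [exact le_refl c; exact hwc; exact hc.le]
  · have hdot : ∑ k, η (σ.symm k) * x k = ∑ i, η i * y i := by
      rw [← Equiv.sum_comp σ (fun k => η (σ.symm k) * x k)]
      apply Finset.sum_congr rfl
      intro i _
      simp [hy]
    have hmins : ∑ k, min (x k - a) 0 = ∑ i, min (y i - a) 0 := by
      rw [← Equiv.sum_comp σ (fun k => min (x k - a) 0)]
      rfl
    rw [hdot, hattain]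
    apply le_csSup
    · refine ⟨∑ k, (1/(K:ℝ)) * x k, ?_⟩
      rintro v ⟨b, rfl⟩
      have hKc : 1/(K:ℝ) ≤ 1 / ((K:ℝ) * (1 - α)) := one_div_le_one_div_of_le hm hmK
      have h1 : (1 / ((K:ℝ) * (1 - α))) * ∑ k, min (x k - b) 0 ≤
          ∑ k, (1/(K:ℝ)) * min (x k - b) 0 := by
        rw [Finset.mul_sum]
        apply Finset.sum_le_sum
        intro k _
        exact mul_le_mul_of_nonpos_right hKc (min_le_right _ _)
      have h2 : ∑ k, (1/(K:ℝ)) * min (x k - b) 0 ≤ ∑ k, (1/(K:ℝ)) * (x k - b) := by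
        apply Finset.sum_le_sum
        intro k _
        exact mul_le_mul_of_nonneg_left (min_le_left _ _) (by positivity)
      have e : ∀ k ∈ Finset.univ, (1/(K:ℝ)) * (x k - b) = (1/(K:ℝ)) * x k - b * (1/(K:ℝ)) :=
        fun k _ => by ring
      have h3 : ∑ k, (1/(K:ℝ)) * (x k - b) = (∑ k, (1/(K:ℝ)) * x k) - b := by
        rw [Finset.sum_congr rfl e, Finset.sum_sub_distrib, Finset.sum_const,
          Finset.card_univ, Fintype.card_fin, nsmul_eq_mul]
        have hb : (K:ℝ) * (b * (1/(K:ℝ))) = b := by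
          field_simp
        all_goals linarith [hb]
      linarith
    · exact ⟨a, by rw [hmins]⟩


lemma exists_riskAdj_env (K : ℕ) (hK : 1 ≤ K) (α : ℝ) (hα0 : 0 ≤ α) (hα1 : α < 1)
    (lam : ℝ) (hlam : 0 ≤ lam ∧ lam ≤ 1) (x : Fin K → ℝ) :
    ∃ θ : Fin K → ℝ, (∑ k, θ k) = 1 ∧
      (∀ k, lam / K ≤ θ k ∧ θ k ≤ lam / K + (1 - lam) / (K * (1 - α))) ∧
      (∑ k, θ k * x k) ≤ riskAdj K α lam x ∧
      (∀ y : Fin K → ℝ, riskAdj K α lam y ≤ ∑ k, θ k * y k) := by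
  have hKpos : (0:ℝ) < K := by exact_mod_cast hK
  obtain ⟨θ', hsum', hbd', hatt'⟩ := exists_cvar_attain K hK α hα0 hα1 x
  have hl1 : 0 ≤ 1 - lam := by linarith [hlam.2]
  refine ⟨fun k => lam / K + (1 - lam) * θ' k, ?_, ?_, ?_, ?_⟩
  · rw [Finset.sum_add_distrib, ← Finset.mul_sum, hsum', Finset.sum_const,
      Finset.card_univ, Fintype.card_fin, nsmul_eq_mul]
    field_simp
    ring
  · intro k
    constructor
    · have := mul_nonneg hl1 (hbd' k).1
      linarith
    · have h := mul_le_mul_of_nonneg_left (hbd' k).2 hl1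
      have : (1 - lam) * (1 / ((K:ℝ) * (1 - α))) = (1 - lam) / ((K:ℝ) * (1 - α)) := by ring
      linarith
  · -- dot with x ≤ riskAdj
    have hexp : ∑ k, (lam / (K:ℝ) + (1 - lam) * θ' k) * x k =
        lam * ((1/(K:ℝ)) * ∑ k, x k) + (1 - lam) * ∑ k, θ' k * x k := by
      rw [Finset.mul_sum, Finset.mul_sum, Finset.mul_sum, ← Finset.sum_add_distrib]
      exact Finset.sum_congr rfl (fun k _ => by ring)
    rw [hexp, riskAdj]
    have := mul_le_mul_of_nonneg_left hatt' hl1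
    linarith
  · intro y
    obtain ⟨h1, h2⟩ := And.intro (cvar_le_dot K α y θ' (fun k => (hbd' k).1)
      (fun k => (hbd' k).2) hsum') trivial
    have hexp : ∑ k, (lam / (K:ℝ) + (1 - lam) * θ' k) * y k =
        lam * ((1/(K:ℝ)) * ∑ k, y k) + (1 - lam) * ∑ k, θ' k * y k := by
      rw [Finset.mul_sum, Finset.mul_sum, Finset.mul_sum, ← Finset.sum_add_distrib]
      exact Finset.sum_congr rfl (fun k _ => by ring)
    rw [hexp, riskAdj]
    have := mul_le_mul_of_nonneg_left h1 hl1
    linarith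

lemma exists_interp (K : ℕ) (lo hi p : ℝ) (π θa θb : Fin K → ℝ)
    (hsa : ∑ k, θa k = 1) (hsb : ∑ k, θb k = 1)
    (hba : ∀ k, lo ≤ θa k ∧ θa k ≤ hi) (hbb : ∀ k, lo ≤ θb k ∧ θb k ≤ hi)
    (hpa : p ≤ ∑ k, θa k * π k) (hpb : ∑ k, θb k * π k ≤ p) :
    ∃ θ : Fin K → ℝ, (∑ k, θ k) = 1 ∧ (∀ k, lo ≤ θ k ∧ θ k ≤ hi) ∧
      p = ∑ k, θ k * π k := by
  set A : ℝ := ∑ k, θa k * π k with hA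
  set B : ℝ := ∑ k, θb k * π k with hB
  rcases eq_or_lt_of_le (hpb.trans hpa) with h | h
  · exact ⟨θa, hsa, hba, by rw [← hA]; linarith [le_antisymm hpa (h ▸ hpb)]⟩
  · set t : ℝ := (p - B) / (A - B) with ht
    have hAB : 0 < A - B := by linarith
    have ht0 : 0 ≤ t := div_nonneg (by linarith) hAB.le
    have ht1 : t ≤ 1 := by
      rw [ht, div_le_one hAB]
      linarith
    refine ⟨fun k => t * θa k + (1 - t) * θb k, ?_, ?_, ?_⟩
    · rw [Finset.sum_add_distrib, ← Finset.mul_sum, ← Finset.mul_sum, hsa, hsb]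
      ring
    · intro k
      constructor
      · have h1 := mul_le_mul_of_nonneg_left (hba k).1 ht0
        have h2 := mul_le_mul_of_nonneg_left (hbb k).1 (by linarith : (0:ℝ) ≤ 1 - t)
        show lo ≤ t * θa k + (1 - t) * θb k
        nlinarith [h1, h2]
      · have h1 := mul_le_mul_of_nonneg_left (hba k).2 ht0
        have h2 := mul_le_mul_of_nonneg_left (hbb k).2 (by linarith : (0:ℝ) ≤ 1 - t)
        show t * θa k + (1 - t) * θb k ≤ hi
        nlinarith [h1, h2]
    · have hexp : ∑ k, (t * θa k + (1 - t) * θb k) * π k = t * A + (1 - t) * B := by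
        rw [hA, hB, Finset.mul_sum, Finset.mul_sum, ← Finset.sum_add_distrib]
        apply Finset.sum_congr rfl
        intro k _
        ring
      rw [hexp, ht]
      field_simp
      ring

/-- At a competitive equilibrium with strictly positive traded quantity, the forward price
is a risk-adjusted expectation of the spot prices for both the generator and the load:
`p⁰ = ∑ₖ θ k · π k` for dual weights `θ` in each agent's risk envelope. -/
theorem equilibrium_price_is_risk_adjusted_expectation (K : ℕ) (hK : 1 ≤ K)
    (α : ℝ) (hα0 : 0 ≤ α) (hα1 : α < 1)
    (lamg lamd : ℝ) (hlamg : 0 ≤ lamg ∧ lamg ≤ 1) (hlamd : 0 ≤ lamd ∧ lamd ≤ 1)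
    (g d π : Fin K → ℝ) (p₀ q₀ : ℝ) (hq₀ : 0 < q₀)
    (hgen : ∀ q : ℝ, 0 ≤ q →
      riskAdj K α lamg (fun k => (g k - q) * π k) + q * p₀ ≤
        riskAdj K α lamg (fun k => (g k - q₀) * π k) + q₀ * p₀)
    (hload : ∀ q : ℝ, 0 ≤ q →
      riskAdj K α lamd (fun k => (q - d k) * π k) - q * p₀ ≤
        riskAdj K α lamd (fun k => (q₀ - d k) * π k) - q₀ * p₀) :
    (∃ θ : Fin K → ℝ, (∑ k, θ k) = 1 ∧
      (∀ k, lamg / K ≤ θ k ∧ θ k ≤ lamg / K + (1 - lamg) / (K * (1 - α))) ∧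
      p₀ = ∑ k, θ k * π k) ∧
    (∃ θ' : Fin K → ℝ, (∑ k, θ' k) = 1 ∧
      (∀ k, lamd / K ≤ θ' k ∧ θ' k ≤ lamd / K + (1 - lamd) / (K * (1 - α))) ∧
      p₀ = ∑ k, θ' k * π k) := by
  constructor
  · -- generator
    obtain ⟨θa, hsa, hba, hatta, hlba⟩ :=
      exists_riskAdj_env K hK α hα0 hα1 lamg hlamg (fun k => (g k - (q₀ + 1)) * π k)
    obtain ⟨θb, hsb, hbb, hattb, hlbb⟩ :=
      exists_riskAdj_env K hK α hα0 hα1 lamg hlamg (fun k => (g k - q₀ / 2) * π k)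
    -- p₀ ≤ P(θa)
    have hsplita : ∑ k, θa k * ((g k - q₀) * π k) =
        (∑ k, θa k * ((g k - (q₀ + 1)) * π k)) + ∑ k, θa k * π k := by
      rw [← Finset.sum_add_distrib]
      exact Finset.sum_congr rfl (fun k _ => by ring)
    have h1 := hlba (fun k => (g k - q₀) * π k)
    have h2 := hgen (q₀ + 1) (by linarith)
    have hpa : p₀ ≤ ∑ k, θa k * π k := by
      have := hatta
      rw [hsplita] at h1
      linarith
    -- P(θb) ≤ p₀
    have hsplitb : ∑ k, θb k * ((g k - q₀) * π k) =
        (∑ k, θb k * ((g k - q₀ / 2) * π k)) - (q₀ / 2) * ∑ k, θb k * π k := by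
      rw [Finset.mul_sum, ← Finset.sum_sub_distrib]
      exact Finset.sum_congr rfl (fun k _ => by ring)
    have h3 := hlbb (fun k => (g k - q₀) * π k)
    have h4 := hgen (q₀ / 2) (by linarith)
    have hpb : ∑ k, θb k * π k ≤ p₀ := by
      rw [hsplitb] at h3
      nlinarith
    exact exists_interp K _ _ p₀ π θa θb hsa hsb hba hbb hpa hpb
  · -- load
    obtain ⟨θa, hsa, hba, hatta, hlba⟩ :=
      exists_riskAdj_env K hK α hα0 hα1 lamd hlamd (fun k => (q₀ / 2 - d k) * π k)
    obtain ⟨θb, hsb, hbb, hattb, hlbb⟩ :=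
      exists_riskAdj_env K hK α hα0 hα1 lamd hlamd (fun k => ((q₀ + 1) - d k) * π k)
    -- p₀ ≤ P(θa) where θa attains at q = q₀/2
    have hsplita : ∑ k, θa k * ((q₀ - d k) * π k) =
        (∑ k, θa k * ((q₀ / 2 - d k) * π k)) + (q₀ / 2) * ∑ k, θa k * π k := by
      rw [Finset.mul_sum, ← Finset.sum_add_distrib]
      exact Finset.sum_congr rfl (fun k _ => by ring)
    have h1 := hlba (fun k => (q₀ - d k) * π k)
    have h2 := hload (q₀ / 2) (by linarith)
    have hpa : p₀ ≤ ∑ k, θa k * π k := by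
      rw [hsplita] at h1
      nlinarith
    -- P(θb) ≤ p₀ where θb attains at q = q₀ + 1
    have hsplitb : ∑ k, θb k * ((q₀ - d k) * π k) =
        (∑ k, θb k * (((q₀ + 1) - d k) * π k)) - ∑ k, θb k * π k := by
      rw [← Finset.sum_sub_distrib]
      exact Finset.sum_congr rfl (fun k _ => by ring)
    have h3 := hlbb (fun k => (q₀ - d k) * π k)
    have h4 := hload (q₀ + 1) (by linarith)
    have hpb : ∑ k, θb k * π k ≤ p₀ := by
      rw [hsplitb] at h3
      linarith
    exact exists_interp K _ _ p₀ π θa θb hsa hsb hba hbb hpa hpb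
end

section
/- Suppose the generator is risk neutral, λg = 1, and (p⁰, q⁰) is a competitive equilibrium with q⁰ > 0: q⁰ maximizes ρ_{1}(fun k => (g k − q)·π k) + q·p⁰ = (1/K)·∑_{k} (g k − q)·π k + q·p⁰ over q ≥ 0 and q⁰ maximizes ρ_{λd}(fun k => (q − d k)·π k) − q·p⁰ over q ≥ 0 for some λd ∈ [0,1]. Then the equilibrium contract price equals the average spot price: p⁰ = (1/K)·∑_{k} π k. -/
open Finset

/-- If the generator is risk neutral (`λg = 1`), any competitive equilibrium with `q⁰ > 0`
has contract price equal to the average spot price. -/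
theorem risk_neutral_generator_price_eq_average_spot (K : ℕ) (hK : 1 ≤ K)
    (α : ℝ) (hα0 : 0 ≤ α) (hα1 : α < 1)
    (lamd : ℝ) (hlamd : 0 ≤ lamd ∧ lamd ≤ 1)
    (g d π : Fin K → ℝ) (p₀ q₀ : ℝ) (hq₀ : 0 < q₀)
    (hgen : ∀ q : ℝ, 0 ≤ q →
      riskAdj K α 1 (fun k => (g k - q) * π k) + q * p₀ ≤
        riskAdj K α 1 (fun k => (g k - q₀) * π k) + q₀ * p₀)
    (hload : ∀ q : ℝ, 0 ≤ q →
      riskAdj K α lamd (fun k => (q - d k) * π k) - q * p₀ ≤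
        riskAdj K α lamd (fun k => (q₀ - d k) * π k) - q₀ * p₀) :
    p₀ = (1 / K) * ∑ k, π k := by
  have key : ∀ q : ℝ, 0 ≤ q →
      (1 / (K : ℝ)) * ∑ k, (g k - q) * π k + q * p₀ ≤
        (1 / (K : ℝ)) * ∑ k, (g k - q₀) * π k + q₀ * p₀ := by
    intro q hq
    have := hgen q hq
    simpa [riskAdj] using this
  have expand : ∀ q : ℝ, ∑ k, (g k - q) * π k
      = (∑ k, g k * π k) - q * ∑ k, π k := by
    intro q
    rw [Finset.mul_sum]
    rw [← Finset.sum_sub_distrib]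
    exact Finset.sum_congr rfl fun k _ => by ring
  have h1 := key 0 le_rfl
  have h2 := key (2 * q₀) (by linarith)
  simp only [expand] at h1 h2
  nlinarith [h1, h2, hq₀]
end

section
/- Suppose the load is risk neutral, λd = 1, and (p⁰, q⁰) is a competitive equilibrium with q⁰ > 0: q⁰ maximizes ρ_{λg}(fun k => (g k − q)·π k) + q·p⁰ over q ≥ 0 for some λg ∈ [0,1], and q⁰ maximizes ρ_{1}(fun k => (q − d k)·π k) − q·p⁰ = (1/K)·∑_{k} (q − d k)·π k − q·p⁰ over q ≥ 0. Then the equilibrium contract price equals the average spot price: p⁰ = (1/K)·∑_{k} π k. -/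
open Finset

/-- If the load is risk neutral (`λd = 1`), any competitive equilibrium with `q⁰ > 0`
has contract price equal to the average spot price. -/
theorem risk_neutral_load_price_eq_average_spot (K : ℕ) (hK : 1 ≤ K)
    (α : ℝ) (hα0 : 0 ≤ α) (hα1 : α < 1)
    (lamg : ℝ) (hlamg : 0 ≤ lamg ∧ lamg ≤ 1)
    (g d π : Fin K → ℝ) (p₀ q₀ : ℝ) (hq₀ : 0 < q₀)
    (hgen : ∀ q : ℝ, 0 ≤ q →
      riskAdj K α lamg (fun k => (g k - q) * π k) + q * p₀ ≤
        riskAdj K α lamg (fun k => (g k - q₀) * π k) + q₀ * p₀)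
    (hload : ∀ q : ℝ, 0 ≤ q →
      riskAdj K α 1 (fun k => (q - d k) * π k) - q * p₀ ≤
        riskAdj K α 1 (fun k => (q₀ - d k) * π k) - q₀ * p₀) :
    p₀ = (1 / K) * ∑ k, π k := by
  have hexp : ∀ q : ℝ, riskAdj K α 1 (fun k => (q - d k) * π k)
      = (1 / K) * (q * ∑ k, π k - ∑ k, d k * π k) := by
    intro q
    simp only [riskAdj, sub_self, zero_mul, add_zero, one_mul, sub_mul,
      Finset.sum_sub_distrib, Finset.mul_sum, ← Finset.sum_mul]
  have h1 := hload (q₀ + 1) (by linarith)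
  have h2 := hload 0 le_rfl
  rw [hexp, hexp] at h1
  rw [hexp, hexp] at h2
  have hKpos : (0:ℝ) < K := by exact_mod_cast hK
  have hKinv : (0:ℝ) < 1 / K := by positivity
  nlinarith [mul_pos hq₀ hKinv]
end

section
/- Multi-agent version, equilibrium implies welfare maximum: let there be J sellers with outputs g j : Fin K → ℝ and risk parameters λ j ∈ [0,1], and I buyers with loads d i : Fin K → ℝ and risk parameters μ i ∈ [0,1]. Suppose p⁰ ∈ ℝ and nonnegative contract quantities (q_s⁰ : Fin J → ℝ, q_b⁰ : Fin I → ℝ) satisfy: each q_s⁰ j maximizes ρ_{λ j}(fun k => (g j k − q)·π k) + q·p⁰ over q ≥ 0, each q_b⁰ i maximizes ρ_{μ i}(fun k => (q − d i k)·π k) − q·p⁰ over q ≥ 0, and the market clears: ∑_{i} q_b⁰ i = ∑_{j} q_s⁰ j. Then (q_s⁰, q_b⁰) maximizes the total welfare ∑_{j} ρ_{λ j}(fun k => (g j k − q_s j)·π k) + ∑_{i} ρ_{μ i}(fun k => (q_b i − d i k)·π k) over all q_s ≥ 0, q_b ≥ 0 satisfying ∑_{i} q_b i = ∑_{j} q_s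 j. -/
open Finset

/-- Multi-agent version, equilibrium implies welfare maximum: if at a single price `p⁰`
every seller's and every buyer's contract quantity is individually optimal and the market
clears (`∑ᵢ q_b i = ∑ⱼ q_s j`), then the quantity profile maximizes total welfare over all
nonnegative, market-clearing profiles. -/
theorem multiagent_equilibrium_maximizes_welfare (K J I : ℕ) (hK : 1 ≤ K)
    (α : ℝ) (hα0 : 0 ≤ α) (hα1 : α < 1)
    (lam : Fin J → ℝ) (hlam : ∀ j, 0 ≤ lam j ∧ lam j ≤ 1)
    (mu : Fin I → ℝ) (hmu : ∀ i, 0 ≤ mu i ∧ mu i ≤ 1)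
    (g : Fin J → Fin K → ℝ) (d : Fin I → Fin K → ℝ) (π : Fin K → ℝ)
    (p₀ : ℝ) (qs₀ : Fin J → ℝ) (qb₀ : Fin I → ℝ)
    (hqs₀ : ∀ j, 0 ≤ qs₀ j) (hqb₀ : ∀ i, 0 ≤ qb₀ i)
    (hsell : ∀ j, ∀ q : ℝ, 0 ≤ q →
      riskAdj K α (lam j) (fun k => (g j k - q) * π k) + q * p₀ ≤
        riskAdj K α (lam j) (fun k => (g j k - qs₀ j) * π k) + qs₀ j * p₀)
    (hbuy : ∀ i, ∀ q : ℝ, 0 ≤ q →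
      riskAdj K α (mu i) (fun k => (q - d i k) * π k) - q * p₀ ≤
        riskAdj K α (mu i) (fun k => (qb₀ i - d i k) * π k) - qb₀ i * p₀)
    (hclear : ∑ i, qb₀ i = ∑ j, qs₀ j) :
    ∀ (qs : Fin J → ℝ) (qb : Fin I → ℝ),
      (∀ j, 0 ≤ qs j) → (∀ i, 0 ≤ qb i) → (∑ i, qb i = ∑ j, qs j) →
      (∑ j, riskAdj K α (lam j) (fun k => (g j k - qs j) * π k)) +
          (∑ i, riskAdj K α (mu i) (fun k => (qb i - d i k) * π k)) ≤
        (∑ j, riskAdj K α (lam j) (fun k => (g j k - qs₀ j) * π k)) +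
          (∑ i, riskAdj K α (mu i) (fun k => (qb₀ i - d i k) * π k)) := by
  intro qs qb hqs hqb hcl
  have S : ∑ j, riskAdj K α (lam j) (fun k => (g j k - qs j) * π k) ≤
      ∑ j, (riskAdj K α (lam j) (fun k => (g j k - qs₀ j) * π k) + qs₀ j * p₀ - qs j * p₀) := by
    refine Finset.sum_le_sum fun j _ => ?_
    have := hsell j (qs j) (hqs j); linarith
  have B : ∑ i, riskAdj K α (mu i) (fun k => (qb i - d i k) * π k) ≤
      ∑ i, (riskAdj K α (mu i) (fun k => (qb₀ i - d i k) * π k) - qb₀ i * p₀ + qb i * p₀) := by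
    refine Finset.sum_le_sum fun i _ => ?_
    have := hbuy i (qb i) (hqb i); linarith
  have e1 : (∑ j, qs₀ j) * p₀ = (∑ i, qb₀ i) * p₀ := by rw [hclear]
  have e2 : (∑ j, qs j) * p₀ = (∑ i, qb i) * p₀ := by rw [hcl]
  simp only [Finset.sum_add_distrib, Finset.sum_sub_distrib, ← Finset.sum_mul] at S B
  linarith
end

section
/- Multi-agent version, welfare maximum implies equilibrium price exists: let there be J sellers with outputs g j : Fin K → ℝ and risk parameters λ j ∈ [0,1], and I buyers with loads d i : Fin K → ℝ and risk parameters μ i ∈ [0,1]. Suppose nonnegative quantities (q_s⁰ : Fin J → ℝ, q_b⁰ : Fin I → ℝ) with ∑_{i} q_b⁰ i = ∑_{j} q_s⁰ j maximize the total welfare ∑_{j} ρ_{λ j}(fun k => (g j k − q_s j)·π k) + ∑_{i} ρ_{μ i}(fun k => (q_b i − d i k)·π k) over all q_s ≥ 0, q_b ≥ 0 with ∑_{i} q_b i = ∑_{j} q_s j. Then there exists a single price p⁰ ∈ ℝ (the multiplier of the market-clearing constraint) such that each q_s⁰ j maximizes ρ_{λ j}(fun k => (g j k − q)·π k) + q·p⁰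 over q ≥ 0 and each q_b⁰ i maximizes ρ_{μ i}(fun k => (q − d i k)·π k) − q·p⁰ over q ≥ 0. -/
open Finset

namespace EquilibriumAux

/-! ### Basic properties of the CVaR supremum set -/

def cvarSet (K : ℕ) (α : ℝ) (x : Fin K → ℝ) : Set ℝ :=
  {v : ℝ | ∃ a : ℝ, v = a + (1 / (K * (1 - α))) * ∑ k, min (x k - a) 0}

lemma CVaR_eq {K : ℕ} {α : ℝ} (x : Fin K → ℝ) : CVaR K α x = sSup (cvarSet K α x) := rfl

lemma cvarSet_nonempty {K : ℕ} {α : ℝ} (x : Fin K → ℝ) : (cvarSet K α x).Nonempty :=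
  ⟨_, 0, rfl⟩

section basics
variable {K : ℕ} {α : ℝ} (hK : 1 ≤ K) (hα0 : 0 ≤ α) (hα1 : α < 1)

include hK hα0 hα1 in
lemma mem_cvarSet_le {x : Fin K → ℝ} {v : ℝ} (hv : v ∈ cvarSet K α x) :
    v ≤ ∑ k, |x k| := by
  obtain ⟨a, rfl⟩ := hv
  have hKpos : (0:ℝ) < K := by exact_mod_cast Nat.lt_of_lt_of_le Nat.zero_lt_one hK
  have h1α : (0:ℝ) < 1 - α := by linarith
  set c : ℝ := 1 / (K * (1 - α)) with hc
  have hcpos : 0 < c := by positivity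
  set M : ℝ := ∑ k, |x k| with hM
  have hxM : ∀ k, x k ≤ M := by
    intro k
    calc x k ≤ |x k| := le_abs_self _
    _ ≤ M := Finset.single_le_sum (f := fun k => |x k|) (fun _ _ => abs_nonneg _) (mem_univ k)
  have hsum : ∑ k, min (x k - a) 0 ≤ K * min (M - a) 0 := by
    calc ∑ k, min (x k - a) 0 ≤ ∑ _k : Fin K, min (M - a) 0 :=
          Finset.sum_le_sum (fun k _ => min_le_min (by linarith [hxM k]) le_rfl)
    _ = K * min (M - a) 0 := by simp [mul_comm]
  have hcK : 1 ≤ c * K := by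
    rw [hc]; rw [div_mul_eq_mul_div, one_mul, le_div_iff₀ (by positivity)]
    nlinarith
  have : a + c * ∑ k, min (x k - a) 0 ≤ a + c * (K * min (M - a) 0) := by
    have := mul_le_mul_of_nonneg_left hsum hcpos.le
    linarith
  refine this.trans ?_
  rcases le_total a M with h | h
  · have : min (M - a) 0 ≤ 0 := min_le_right _ _
    nlinarith
  · have hmin : min (M - a) 0 = M - a := min_eq_left (by linarith)
    rw [hmin]
    nlinarith

include hK hα0 hα1 in
lemma cvarSet_bddAbove (x : Fin K → ℝ) : BddAbove (cvarSet K α x) :=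
  ⟨∑ k, |x k|, fun _ hv => mem_cvarSet_le hK hα0 hα1 hv⟩

include hK hα0 hα1 in
lemma le_CVaR {x : Fin K → ℝ} {v : ℝ} (hv : v ∈ cvarSet K α x) : v ≤ CVaR K α x :=
  le_csSup (cvarSet_bddAbove hK hα0 hα1 x) hv

omit hK hα0 hα1 in
lemma CVaR_le {x : Fin K → ℝ} {B : ℝ} (h : ∀ v ∈ cvarSet K α x, v ≤ B) : CVaR K α x ≤ B :=
  csSup_le (cvarSet_nonempty x) h

/-! ### Lipschitz bounds -/

omit hK hα0 hα1 in
lemma min_zero_lip (u v : ℝ) : min u 0 ≤ min v 0 + |u - v| := by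
  rcases le_total u 0 with h | h <;> rcases le_total v 0 with h' | h' <;>
    simp [min_eq_left, min_eq_right, h, h'] <;> cases abs_cases (u - v) <;> linarith

include hK hα0 hα1 in
lemma CVaR_lip_half (x y : Fin K → ℝ) :
    CVaR K α x ≤ CVaR K α y + (1 / (K * (1 - α))) * ∑ k, |x k - y k| := by
  set c : ℝ := 1 / (K * (1 - α)) with hc
  have hKpos : (0:ℝ) < K := by exact_mod_cast Nat.lt_of_lt_of_le Nat.zero_lt_one hK
  have h1a : (0:ℝ) < 1 - α := by linarith
  have hcpos : 0 < c := by rw [hc]; positivity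
  refine CVaR_le ?_
  rintro v ⟨a, rfl⟩
  have hterm : ∑ k, min (x k - a) 0 ≤ ∑ k, min (y k - a) 0 + ∑ k, |x k - y k| := by
    rw [← Finset.sum_add_distrib]
    refine Finset.sum_le_sum fun k _ => ?_
    have := min_zero_lip (x k - a) (y k - a)
    have habs : |x k - a - (y k - a)| = |x k - y k| := by ring_nf
    linarith [this, habs.le, habs.ge]
  have hmem : a + c * ∑ k, min (y k - a) 0 ∈ cvarSet K α y := ⟨a, rfl⟩
  have := le_CVaR hK hα0 hα1 hmem
  nlinarith [mul_le_mul_of_nonneg_left hterm hcpos.le]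

include hK hα0 hα1 in
lemma riskAdj_lip {lam : ℝ} (hl0 : 0 ≤ lam) (hl1 : lam ≤ 1) (x y : Fin K → ℝ) :
    riskAdj K α lam x ≤ riskAdj K α lam y + (1 / (K * (1 - α))) * ∑ k, |x k - y k| := by
  set c : ℝ := 1 / (K * (1 - α)) with hc
  have hKpos : (0:ℝ) < K := by exact_mod_cast Nat.lt_of_lt_of_le Nat.zero_lt_one hK
  have h1α : (0:ℝ) < 1 - α := by linarith
  have hsum : ∑ k, x k ≤ ∑ k, y k + ∑ k, |x k - y k| := by
    rw [← Finset.sum_add_distrib]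
    exact Finset.sum_le_sum fun k _ => by cases abs_cases (x k - y k) <;> linarith
  have hcvar := CVaR_lip_half hK hα0 hα1 x y
  have habs_nonneg : 0 ≤ ∑ k, |x k - y k| := Finset.sum_nonneg fun k _ => abs_nonneg _
  have hKc : 1 / (K:ℝ) ≤ c := by
    rw [hc]
    apply one_div_le_one_div_of_le (by positivity)
    nlinarith
  have hcpos : 0 < c := by rw [hc]; positivity
  unfold riskAdj
  have e1 : lam * ((1/(K:ℝ)) * ∑ k, x k) ≤ lam * ((1/(K:ℝ)) * ∑ k, y k) + lam * c * ∑ k, |x k - y k| := by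
    have h1 : lam * ((1/(K:ℝ)) * ∑ k, x k) ≤ lam * ((1/(K:ℝ)) * ∑ k, y k) + lam * (1/(K:ℝ)) * ∑ k, |x k - y k| := by
      have := mul_le_mul_of_nonneg_left hsum (mul_nonneg hl0 (by positivity : (0:ℝ) ≤ 1/(K:ℝ)))
      ring_nf at this ⊢
      linarith
    have h2 : lam * (1/(K:ℝ)) * ∑ k, |x k - y k| ≤ lam * c * ∑ k, |x k - y k| := by
      apply mul_le_mul_of_nonneg_right _ habs_nonneg
      exact mul_le_mul_of_nonneg_left hKc hl0
    linarith
  have e2 : (1 - lam) * CVaR K α x ≤ (1 - lam) * CVaR K α y + (1 - lam) * c * ∑ k, |x k - y k| := by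
    have := mul_le_mul_of_nonneg_left hcvar (by linarith : (0:ℝ) ≤ 1 - lam)
    rw [← hc] at this
    nlinarith
  nlinarith

/-! ### Concavity -/

omit hK hα0 hα1 in
lemma min_zero_concave {t s u v : ℝ} (ht : 0 ≤ t) (hs : 0 ≤ s) :
    t * min u 0 + s * min v 0 ≤ min (t * u + s * v) 0 := by
  apply le_min
  · have h1 : t * min u 0 ≤ t * u := mul_le_mul_of_nonneg_left (min_le_left _ _) ht
    have h2 : s * min v 0 ≤ s * v := mul_le_mul_of_nonneg_left (min_le_left _ _) hs
    linarith
  · have h1 : t * min u 0 ≤ 0 := mul_nonpos_of_nonneg_of_nonpos ht (min_le_right _ _)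
    have h2 : s * min v 0 ≤ 0 := mul_nonpos_of_nonneg_of_nonpos hs (min_le_right _ _)
    linarith

include hK hα0 hα1 in
lemma CVaR_concave_combination {x₁ x₂ x₃ : Fin K → ℝ} {t s : ℝ}
    (ht : 0 ≤ t) (hs : 0 ≤ s) (hts : t + s = 1)
    (hmix : ∀ k, x₃ k = t * x₁ k + s * x₂ k) :
    t * CVaR K α x₁ + s * CVaR K α x₂ ≤ CVaR K α x₃ := by
  set c : ℝ := 1 / (K * (1 - α)) with hc
  have hKpos : (0:ℝ) < K := by exact_mod_cast Nat.lt_of_lt_of_le Nat.zero_lt_one hK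
  have h1a : (0:ℝ) < 1 - α := by linarith
  have hcpos : 0 < c := by rw [hc]; positivity
  refine le_of_forall_pos_le_add fun ε hε => ?_
  obtain ⟨v₁, hv₁m, hv₁⟩ := exists_lt_of_lt_csSup (cvarSet_nonempty (α := α) x₁)
    (show CVaR K α x₁ - ε < sSup (cvarSet K α x₁) by
      have : sSup (cvarSet K α x₁) = CVaR K α x₁ := rfl
      linarith)
  obtain ⟨v₂, hv₂m, hv₂⟩ := exists_lt_of_lt_csSup (cvarSet_nonempty (α := α) x₂)
    (show CVaR K α x₂ - ε < sSup (cvarSet K α x₂) by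
      have : sSup (cvarSet K α x₂) = CVaR K α x₂ := rfl
      linarith)
  obtain ⟨a₁, rfl⟩ := hv₁m
  obtain ⟨a₂, rfl⟩ := hv₂m
  set a := t * a₁ + s * a₂ with ha
  have hmem : a + c * ∑ k, min (x₃ k - a) 0 ∈ cvarSet K α x₃ := ⟨a, rfl⟩
  have hw := le_CVaR hK hα0 hα1 hmem
  have hptw : ∀ k, t * min (x₁ k - a₁) 0 + s * min (x₂ k - a₂) 0 ≤ min (x₃ k - a) 0 := by
    intro k
    have := min_zero_concave (u := x₁ k - a₁) (v := x₂ k - a₂) ht hs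
    have he : t * (x₁ k - a₁) + s * (x₂ k - a₂) = x₃ k - a := by
      rw [hmix k, ha]; ring
    rw [he] at this
    exact this
  have hsum : t * ∑ k, min (x₁ k - a₁) 0 + s * ∑ k, min (x₂ k - a₂) 0
      ≤ ∑ k, min (x₃ k - a) 0 := by
    rw [Finset.mul_sum, Finset.mul_sum, ← Finset.sum_add_distrib]
    exact Finset.sum_le_sum fun k _ => hptw k
  have hkey : t * (a₁ + c * ∑ k, min (x₁ k - a₁) 0) + s * (a₂ + c * ∑ k, min (x₂ k - a₂) 0)
      ≤ a + c * ∑ k, min (x₃ k - a) 0 := by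
    have := mul_le_mul_of_nonneg_left hsum hcpos.le
    rw [ha]; nlinarith
  nlinarith

include hK hα0 hα1 in
lemma riskAdj_concaveOn {lam : ℝ} (hl1 : lam ≤ 1) (A B : Fin K → ℝ) :
    ConcaveOn ℝ Set.univ (fun q => riskAdj K α lam (fun k => A k + q * B k)) := by
  constructor
  · exact convex_univ
  · intro q₁ _ q₂ _ t s ht hs hts
    simp only [smul_eq_mul]
    unfold riskAdj
    have hcvar := CVaR_concave_combination hK hα0 hα1 (t := t) (s := s)
      (x₁ := fun k => A k + q₁ * B k) (x₂ := fun k => A k + q₂ * B k)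
      (x₃ := fun k => A k + (t * q₁ + s * q₂) * B k) ht hs hts
      (fun k => by linear_combination (-(A k)) * hts)
    have hsum : ∑ k, (A k + (t * q₁ + s * q₂) * B k)
        = t * ∑ k, (A k + q₁ * B k) + s * ∑ k, (A k + q₂ * B k) := by
      rw [Finset.mul_sum, Finset.mul_sum, ← Finset.sum_add_distrib]
      exact Finset.sum_congr rfl fun k _ => by linear_combination (-(A k)) * hts
    rw [hsum]
    nlinarith [mul_le_mul_of_nonneg_left hcvar (show (0:ℝ) ≤ 1 - lam by linarith)]

end basics

/-! ### Slope lemmas for concave functions -/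

section slopes
variable {f : ℝ → ℝ} {a b c : ℝ}

lemma cbase (hf : ConcaveOn ℝ Set.univ f) (h1 : a < b) (h2 : b < c) :
    (f c - f b) * (b - a) ≤ (f b - f a) * (c - b) := by
  have h := hf.slope_anti_adjacent (Set.mem_univ a) (Set.mem_univ c) h1 h2
  rw [div_le_div_iff₀ (by linarith) (by linarith)] at h
  linarith

lemma L0 (hf : ConcaveOn ℝ Set.univ f) (h1 : a < b) (h2 : b < c) :
    (f c - f b)/(c - b) ≤ (f b - f a)/(b - a) :=
  hf.slope_anti_adjacent (Set.mem_univ a) (Set.mem_univ c) h1 h2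

lemma L1 (hf : ConcaveOn ℝ Set.univ f) (h1 : a ≤ b) (h2 : b < c) :
    (f c - f b)/(c - b) ≤ (f c - f a)/(c - a) := by
  rcases h1.eq_or_lt with rfl | h1
  · exact le_refl _
  · rw [div_le_div_iff₀ (by linarith) (by linarith)]
    nlinarith [cbase hf h1 h2]

lemma L1' (hf : ConcaveOn ℝ Set.univ f) (h1 : a ≤ b) (h2 : b < c) :
    (f a - f c)/(c - a) ≤ (f b - f c)/(c - b) := by
  rcases h1.eq_or_lt with rfl | h1
  · exact le_refl _
  · rw [div_le_div_iff₀ (by linarith) (by linarith)]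
    nlinarith [cbase hf h1 h2]

lemma L2 (hf : ConcaveOn ℝ Set.univ f) (h1 : a < b) (h2 : b ≤ c) :
    (f c - f a)/(c - a) ≤ (f b - f a)/(b - a) := by
  rcases h2.eq_or_lt with rfl | h2
  · exact le_refl _
  · rw [div_le_div_iff₀ (by linarith) (by linarith)]
    nlinarith [cbase hf h1 h2]

lemma L2' (hf : ConcaveOn ℝ Set.univ f) (h1 : a < b) (h2 : b ≤ c) :
    (f a - f b)/(b - a) ≤ (f a - f c)/(c - a) := by
  rcases h2.eq_or_lt with rfl | h2
  · exact le_refl _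
  · rw [div_le_div_iff₀ (by linarith) (by linarith)]
    nlinarith [cbase hf h1 h2]

lemma L3 (hf : ConcaveOn ℝ Set.univ f) (h1 : a < b) (h2 : b < c) :
    (f a - f b)/(b - a) ≤ (f b - f c)/(c - b) := by
  rw [div_le_div_iff₀ (by linarith) (by linarith)]
  nlinarith [cbase hf h1 h2]

end slopes

/-! ### Sums over coordinate updates -/

lemma sum_update1 {n : ℕ} (F : Fin n → ℝ → ℝ) (q : Fin n → ℝ) (j : Fin n) (a : ℝ) :
    ∑ x, F x (Function.update q j a x) = ∑ x, F x (q x) - F j (q j) + F j a := by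
  have h1 := Finset.sum_erase_add Finset.univ
    (fun x => F x (Function.update q j a x)) (Finset.mem_univ j)
  have h2 := Finset.sum_erase_add Finset.univ (fun x => F x (q x)) (Finset.mem_univ j)
  have h3 : ∑ x ∈ Finset.univ.erase j, F x (Function.update q j a x)
      = ∑ x ∈ Finset.univ.erase j, F x (q x) :=
    Finset.sum_congr rfl fun x hx => by
      rw [Function.update_of_ne (Finset.ne_of_mem_erase hx)]
  simp only [Function.update_self] at h1
  linarith

lemma sum_update2 {n : ℕ} (F : Fin n → ℝ → ℝ) (q : Fin n → ℝ) {j j' : Fin n}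
    (h : j' ≠ j) (a b : ℝ) :
    ∑ x, F x (Function.update (Function.update q j a) j' b x)
      = ∑ x, F x (q x) - F j (q j) - F j' (q j') + F j a + F j' b := by
  rw [sum_update1 F (Function.update q j a) j' b, sum_update1 F q j a,
    Function.update_of_ne h]
  ring

lemma sum_update1' {n : ℕ} (q : Fin n → ℝ) (j : Fin n) (a : ℝ) :
    ∑ x, Function.update q j a x = ∑ x, q x - q j + a := by
  simpa using sum_update1 (fun _ r => r) q j a

lemma sum_update2' {n : ℕ} (q : Fin n → ℝ) {j j' : Fin n} (h : j' ≠ j) (a b : ℝ) :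
    ∑ x, Function.update (Function.update q j a) j' b x
      = ∑ x, q x - q j - q j' + a + b := by
  simpa using sum_update2 (fun _ r => r) q h a b

theorem equilibrium_abstract {J I : ℕ} (qs₀ : Fin J → ℝ) (qb₀ : Fin I → ℝ)
    (fs : Fin J → ℝ → ℝ) (fb : Fin I → ℝ → ℝ) (C : ℝ) (hC : 0 ≤ C)
    (hcs : ∀ j, ConcaveOn ℝ Set.univ (fs j))
    (hcb : ∀ i, ConcaveOn ℝ Set.univ (fb i))
    (hls : ∀ j (q q' : ℝ), fs j q ≤ fs j q' + C * |q - q'|)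
    (hlb : ∀ i (q q' : ℝ), fb i q ≤ fb i q' + C * |q - q'|)
    (hqs₀ : ∀ j, 0 ≤ qs₀ j) (hqb₀ : ∀ i, 0 ≤ qb₀ i)
    (hclear : ∑ i, qb₀ i = ∑ j, qs₀ j)
    (hwelf : ∀ (qs : Fin J → ℝ) (qb : Fin I → ℝ),
      (∀ j, 0 ≤ qs j) → (∀ i, 0 ≤ qb i) → (∑ i, qb i = ∑ j, qs j) →
      (∑ j, fs j (qs j)) + (∑ i, fb i (qb i)) ≤
        (∑ j, fs j (qs₀ j)) + (∑ i, fb i (qb₀ i))) :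
    ∃ p₀ : ℝ,
      (∀ j, ∀ q : ℝ, 0 ≤ q → fs j q + q * p₀ ≤ fs j (qs₀ j) + qs₀ j * p₀) ∧
      (∀ i, ∀ q : ℝ, 0 ≤ q → fb i q - q * p₀ ≤ fb i (qb₀ i) - qb₀ i * p₀) := by
  classical
  -- Perturbation consequences of welfare optimality
  have pert_ss : ∀ j j' : Fin J, j' ≠ j → ∀ δ : ℝ, 0 < δ → δ ≤ qs₀ j →
      fs j (qs₀ j - δ) + fs j' (qs₀ j' + δ) ≤ fs j (qs₀ j) + fs j' (qs₀ j') := by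
    intro j j' hjj δ hδ hδle
    set qs := Function.update (Function.update qs₀ j (qs₀ j - δ)) j' (qs₀ j' + δ) with hqs
    have hnn : ∀ x, 0 ≤ qs x := by
      intro x
      rcases eq_or_ne x j' with rfl | hx'
      · rw [hqs, Function.update_self]; linarith [hqs₀ x]
      · rw [hqs, Function.update_of_ne hx']
        rcases eq_or_ne x j with rfl | hx
        · rw [Function.update_self]; linarith
        · rw [Function.update_of_ne hx]; exact hqs₀ x
    have hbal : ∑ i, qb₀ i = ∑ x, qs x := by
      rw [hqs, sum_update2' qs₀ hjj]; linarith [hclear]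
    have hw := hwelf qs qb₀ hnn hqb₀ hbal
    rw [hqs, sum_update2 fs qs₀ hjj] at hw
    linarith
  have pert_sb : ∀ (j : Fin J) (i : Fin I), ∀ δ : ℝ, 0 < δ → δ ≤ qs₀ j → δ ≤ qb₀ i →
      fs j (qs₀ j - δ) + fb i (qb₀ i - δ) ≤ fs j (qs₀ j) + fb i (qb₀ i) := by
    intro j i δ hδ hδs hδb
    have hnns : ∀ x, 0 ≤ Function.update qs₀ j (qs₀ j - δ) x := by
      intro x
      rcases eq_or_ne x j with rfl | hx
      · rw [Function.update_self]; linarith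
      · rw [Function.update_of_ne hx]; exact hqs₀ x
    have hnnb : ∀ x, 0 ≤ Function.update qb₀ i (qb₀ i - δ) x := by
      intro x
      rcases eq_or_ne x i with rfl | hx
      · rw [Function.update_self]; linarith
      · rw [Function.update_of_ne hx]; exact hqb₀ x
    have hbal : ∑ x, Function.update qb₀ i (qb₀ i - δ) x
        = ∑ x, Function.update qs₀ j (qs₀ j - δ) x := by
      rw [sum_update1' qs₀, sum_update1' qb₀]; linarith [hclear]
    have hw := hwelf _ _ hnns hnnb hbal
    rw [sum_update1 fs qs₀, sum_update1 fb qb₀] at hw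
    linarith
  have pert_bs : ∀ (i : Fin I) (j' : Fin J), ∀ δ : ℝ, 0 < δ →
      fb i (qb₀ i + δ) + fs j' (qs₀ j' + δ) ≤ fb i (qb₀ i) + fs j' (qs₀ j') := by
    intro i j' δ hδ
    have hnns : ∀ x, 0 ≤ Function.update qs₀ j' (qs₀ j' + δ) x := by
      intro x
      rcases eq_or_ne x j' with rfl | hx
      · rw [Function.update_self]; linarith [hqs₀ x]
      · rw [Function.update_of_ne hx]; exact hqs₀ x
    have hnnb : ∀ x, 0 ≤ Function.update qb₀ i (qb₀ i + δ) x := by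
      intro x
      rcases eq_or_ne x i with rfl | hx
      · rw [Function.update_self]; linarith [hqb₀ x]
      · rw [Function.update_of_ne hx]; exact hqb₀ x
    have hbal : ∑ x, Function.update qb₀ i (qb₀ i + δ) x
        = ∑ x, Function.update qs₀ j' (qs₀ j' + δ) x := by
      rw [sum_update1' qs₀, sum_update1' qb₀]; linarith [hclear]
    have hw := hwelf _ _ hnns hnnb hbal
    rw [sum_update1 fs qs₀, sum_update1 fb qb₀] at hw
    linarith
  have pert_bb : ∀ i i' : Fin I, i' ≠ i → ∀ δ : ℝ, 0 < δ → δ ≤ qb₀ i' →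
      fb i (qb₀ i + δ) + fb i' (qb₀ i' - δ) ≤ fb i (qb₀ i) + fb i' (qb₀ i') := by
    intro i i' hii δ hδ hδle
    set qb := Function.update (Function.update qb₀ i (qb₀ i + δ)) i' (qb₀ i' - δ) with hqb
    have hnn : ∀ x, 0 ≤ qb x := by
      intro x
      rcases eq_or_ne x i' with rfl | hx'
      · rw [hqb, Function.update_self]; linarith
      · rw [hqb, Function.update_of_ne hx']
        rcases eq_or_ne x i with rfl | hx
        · rw [Function.update_self]; linarith [hqb₀ x]
        · rw [Function.update_of_ne hx]; exact hqb₀ x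
    have hbal : ∑ x, qb x = ∑ j, qs₀ j := by
      rw [hqb, sum_update2' qb₀ hii]; linarith [hclear]
    have hw := hwelf qs₀ qb hqs₀ hnn hbal
    rw [hqb, sum_update2 fb qb₀ hii] at hw
    linarith
  -- The candidate price
  set LB : Set ℝ := {r : ℝ |
      (∃ j q, 0 ≤ q ∧ q < qs₀ j ∧ r = (fs j q - fs j (qs₀ j)) / (qs₀ j - q)) ∨
      (∃ i q, qb₀ i < q ∧ r = (fb i q - fb i (qb₀ i)) / (q - qb₀ i))} with hLBdef
  have hub : ∀ r ∈ insert (-C) LB, r ≤ C := by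
    rintro r (rfl | hr)
    · linarith
    · rcases hr with ⟨j, q, hq0, hq, rfl⟩ | ⟨i, q, hq, rfl⟩
      · rw [div_le_iff₀ (by linarith)]
        have h := hls j q (qs₀ j)
        rw [abs_of_neg (by linarith : q - qs₀ j < 0)] at h
        linarith
      · rw [div_le_iff₀ (by linarith)]
        have h := hlb i q (qb₀ i)
        rw [abs_of_pos (by linarith : 0 < q - qb₀ i)] at h
        linarith
  have hbdd : BddAbove (insert (-C) LB) := ⟨C, hub⟩
  have hne : (insert (-C) LB).Nonempty := ⟨-C, Set.mem_insert _ _⟩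
  set p₀ := sSup (insert (-C) LB) with hp₀
  -- Claim: every seller's "marginal loss" upper bound dominates the whole set
  have claimS : ∀ (j' : Fin J) (q₂ : ℝ), qs₀ j' < q₂ →
      ∀ r ∈ insert (-C) LB, r ≤ (fs j' (qs₀ j') - fs j' q₂) / (q₂ - qs₀ j') := by
    intro j' q₂ hq₂ r hr
    rcases hr with rfl | hr
    · rw [le_div_iff₀ (by linarith)]
      have h := hls j' q₂ (qs₀ j')
      rw [abs_of_pos (by linarith : 0 < q₂ - qs₀ j')] at h
      nlinarith
    · rcases hr with ⟨j, q₁, hq₁0, hq₁, rfl⟩ | ⟨i, q₁, hq₁, rfl⟩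
      · by_cases hjj : j = j'
        · subst hjj
          exact L3 (hcs j) hq₁ hq₂
        · set δ := min (qs₀ j - q₁) (q₂ - qs₀ j') with hδdef
          have hδ : 0 < δ := lt_min (by linarith) (by linarith)
          have hδ1 : δ ≤ qs₀ j - q₁ := min_le_left _ _
          have hδ2 : δ ≤ q₂ - qs₀ j' := min_le_right _ _
          have hpert := pert_ss j j' (fun h => hjj h.symm) δ hδ (by linarith)
          have s1 : (fs j q₁ - fs j (qs₀ j))/(qs₀ j - q₁)
              ≤ (fs j (qs₀ j - δ) - fs j (qs₀ j))/δ := by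
            have h := L1' (hcs j) (show q₁ ≤ qs₀ j - δ by linarith)
              (show qs₀ j - δ < qs₀ j by linarith)
            have e : qs₀ j - (qs₀ j - δ) = δ := by ring
            rw [e] at h; exact h
          have s2 : (fs j (qs₀ j - δ) - fs j (qs₀ j))/δ
              ≤ (fs j' (qs₀ j') - fs j' (qs₀ j' + δ))/δ := by
            exact div_le_div_of_nonneg_right (by linarith) hδ.le
          have s3 : (fs j' (qs₀ j') - fs j' (qs₀ j' + δ))/δ
              ≤ (fs j' (qs₀ j') - fs j' q₂)/(q₂ - qs₀ j') := by
            have h := L2' (hcs j') (show qs₀ j' < qs₀ j' + δ by linarith)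
              (show qs₀ j' + δ ≤ q₂ by linarith)
            have e : qs₀ j' + δ - qs₀ j' = δ := by ring
            rw [e] at h; exact h
          linarith
      · set δ := min (q₁ - qb₀ i) (q₂ - qs₀ j') with hδdef
        have hδ : 0 < δ := lt_min (by linarith) (by linarith)
        have hδ1 : δ ≤ q₁ - qb₀ i := min_le_left _ _
        have hδ2 : δ ≤ q₂ - qs₀ j' := min_le_right _ _
        have hpert := pert_bs i j' δ hδ
        have s1 : (fb i q₁ - fb i (qb₀ i))/(q₁ - qb₀ i)
            ≤ (fb i (qb₀ i + δ) - fb i (qb₀ i))/δ := by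
          have h := L2 (hcb i) (show qb₀ i < qb₀ i + δ by linarith)
            (show qb₀ i + δ ≤ q₁ by linarith)
          have e : qb₀ i + δ - qb₀ i = δ := by ring
          rw [e] at h; exact h
        have s2 : (fb i (qb₀ i + δ) - fb i (qb₀ i))/δ
            ≤ (fs j' (qs₀ j') - fs j' (qs₀ j' + δ))/δ := by
          exact div_le_div_of_nonneg_right (by linarith) hδ.le
        have s3 : (fs j' (qs₀ j') - fs j' (qs₀ j' + δ))/δ
            ≤ (fs j' (qs₀ j') - fs j' q₂)/(q₂ - qs₀ j') := by
          have h := L2' (hcs j') (show qs₀ j' < qs₀ j' + δ by linarith)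
            (show qs₀ j' + δ ≤ q₂ by linarith)
          have e : qs₀ j' + δ - qs₀ j' = δ := by ring
          rw [e] at h; exact h
        linarith
  have claimB : ∀ (i' : Fin I) (q₂ : ℝ), 0 ≤ q₂ → q₂ < qb₀ i' →
      ∀ r ∈ insert (-C) LB, r ≤ (fb i' (qb₀ i') - fb i' q₂) / (qb₀ i' - q₂) := by
    intro i' q₂ hq₂0 hq₂ r hr
    rcases hr with rfl | hr
    · rw [le_div_iff₀ (by linarith)]
      have h := hlb i' q₂ (qb₀ i')
      rw [abs_of_neg (by linarith : q₂ - qb₀ i' < 0)] at h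
      nlinarith
    · rcases hr with ⟨j, q₁, hq₁0, hq₁, rfl⟩ | ⟨i, q₁, hq₁, rfl⟩
      · set δ := min (qs₀ j - q₁) (qb₀ i' - q₂) with hδdef
        have hδ : 0 < δ := lt_min (by linarith) (by linarith)
        have hδ1 : δ ≤ qs₀ j - q₁ := min_le_left _ _
        have hδ2 : δ ≤ qb₀ i' - q₂ := min_le_right _ _
        have hpert := pert_sb j i' δ hδ (by linarith) (by linarith)
        have s1 : (fs j q₁ - fs j (qs₀ j))/(qs₀ j - q₁)
            ≤ (fs j (qs₀ j - δ) - fs j (qs₀ j))/δ := by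
          have h := L1' (hcs j) (show q₁ ≤ qs₀ j - δ by linarith)
            (show qs₀ j - δ < qs₀ j by linarith)
          have e : qs₀ j - (qs₀ j - δ) = δ := by ring
          rw [e] at h; exact h
        have s2 : (fs j (qs₀ j - δ) - fs j (qs₀ j))/δ
            ≤ (fb i' (qb₀ i') - fb i' (qb₀ i' - δ))/δ := by
          exact div_le_div_of_nonneg_right (by linarith) hδ.le
        have s3 : (fb i' (qb₀ i') - fb i' (qb₀ i' - δ))/δ
            ≤ (fb i' (qb₀ i') - fb i' q₂)/(qb₀ i' - q₂) := by
          have h := L1 (hcb i') (show q₂ ≤ qb₀ i' - δ by linarith)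
            (show qb₀ i' - δ < qb₀ i' by linarith)
          have e : qb₀ i' - (qb₀ i' - δ) = δ := by ring
          rw [e] at h; exact h
        linarith
      · by_cases hii : i = i'
        · subst hii
          exact L0 (hcb i) hq₂ hq₁
        · set δ := min (q₁ - qb₀ i) (qb₀ i' - q₂) with hδdef
          have hδ : 0 < δ := lt_min (by linarith) (by linarith)
          have hδ1 : δ ≤ q₁ - qb₀ i := min_le_left _ _
          have hδ2 : δ ≤ qb₀ i' - q₂ := min_le_right _ _
          have hpert := pert_bb i i' (fun h => hii h.symm) δ hδ (by linarith)
          have s1 : (fb i q₁ - fb i (qb₀ i))/(q₁ - qb₀ i)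
              ≤ (fb i (qb₀ i + δ) - fb i (qb₀ i))/δ := by
            have h := L2 (hcb i) (show qb₀ i < qb₀ i + δ by linarith)
              (show qb₀ i + δ ≤ q₁ by linarith)
            have e : qb₀ i + δ - qb₀ i = δ := by ring
            rw [e] at h; exact h
          have s2 : (fb i (qb₀ i + δ) - fb i (qb₀ i))/δ
              ≤ (fb i' (qb₀ i') - fb i' (qb₀ i' - δ))/δ := by
            exact div_le_div_of_nonneg_right (by linarith) hδ.le
          have s3 : (fb i' (qb₀ i') - fb i' (qb₀ i' - δ))/δ
              ≤ (fb i' (qb₀ i') - fb i' q₂)/(qb₀ i' - q₂) := by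
            have h := L1 (hcb i') (show q₂ ≤ qb₀ i' - δ by linarith)
              (show qb₀ i' - δ < qb₀ i' by linarith)
            have e : qb₀ i' - (qb₀ i' - δ) = δ := by ring
            rw [e] at h; exact h
          linarith
  refine ⟨p₀, ?_, ?_⟩
  · intro j q hq0
    rcases lt_trichotomy q (qs₀ j) with h | h | h
    · have hmem : (fs j q - fs j (qs₀ j)) / (qs₀ j - q) ∈ insert (-C) LB :=
        Set.mem_insert_of_mem _ (Or.inl ⟨j, q, hq0, h, rfl⟩)
      have hle := le_csSup hbdd hmem
      rw [div_le_iff₀ (by linarith : (0:ℝ) < qs₀ j - q)] at hle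
      nlinarith
    · rw [h]
    · have hle : p₀ ≤ (fs j (qs₀ j) - fs j q) / (q - qs₀ j) :=
        csSup_le hne (claimS j q h)
      rw [le_div_iff₀ (by linarith : (0:ℝ) < q - qs₀ j)] at hle
      nlinarith
  · intro i q hq0
    rcases lt_trichotomy q (qb₀ i) with h | h | h
    · have hle : p₀ ≤ (fb i (qb₀ i) - fb i q) / (qb₀ i - q) :=
        csSup_le hne (claimB i q hq0 h)
      rw [le_div_iff₀ (by linarith : (0:ℝ) < qb₀ i - q)] at hle
      nlinarith
    · rw [h]
    · have hmem : (fb i q - fb i (qb₀ i)) / (q - qb₀ i) ∈ insert (-C) LB :=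
        Set.mem_insert_of_mem _ (Or.inr ⟨i, q, h, rfl⟩)
      have hle := le_csSup hbdd hmem
      rw [div_le_iff₀ (by linarith : (0:ℝ) < q - qb₀ i)] at hle
      nlinarith

end EquilibriumAux


/-- Multi-agent version, welfare maximum implies equilibrium: if a nonnegative,
market-clearing quantity profile maximizes total welfare, there exists a single price `p⁰`
(the multiplier of the market-clearing constraint) at which every seller's and every
buyer's quantity is individually optimal. -/
theorem multiagent_welfare_maximum_yields_equilibrium_price (K J I : ℕ) (hK : 1 ≤ K)
    (α : ℝ) (hα0 : 0 ≤ α) (hα1 : α < 1)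
    (lam : Fin J → ℝ) (hlam : ∀ j, 0 ≤ lam j ∧ lam j ≤ 1)
    (mu : Fin I → ℝ) (hmu : ∀ i, 0 ≤ mu i ∧ mu i ≤ 1)
    (g : Fin J → Fin K → ℝ) (d : Fin I → Fin K → ℝ) (π : Fin K → ℝ)
    (qs₀ : Fin J → ℝ) (qb₀ : Fin I → ℝ)
    (hqs₀ : ∀ j, 0 ≤ qs₀ j) (hqb₀ : ∀ i, 0 ≤ qb₀ i)
    (hclear : ∑ i, qb₀ i = ∑ j, qs₀ j)
    (hwelf : ∀ (qs : Fin J → ℝ) (qb : Fin I → ℝ),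
      (∀ j, 0 ≤ qs j) → (∀ i, 0 ≤ qb i) → (∑ i, qb i = ∑ j, qs j) →
      (∑ j, riskAdj K α (lam j) (fun k => (g j k - qs j) * π k)) +
          (∑ i, riskAdj K α (mu i) (fun k => (qb i - d i k) * π k)) ≤
        (∑ j, riskAdj K α (lam j) (fun k => (g j k - qs₀ j) * π k)) +
          (∑ i, riskAdj K α (mu i) (fun k => (qb₀ i - d i k) * π k))) :
    ∃ p₀ : ℝ,
      (∀ j, ∀ q : ℝ, 0 ≤ q →
        riskAdj K α (lam j) (fun k => (g j k - q) * π k) + q * p₀ ≤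
          riskAdj K α (lam j) (fun k => (g j k - qs₀ j) * π k) + qs₀ j * p₀) ∧
      (∀ i, ∀ q : ℝ, 0 ≤ q →
        riskAdj K α (mu i) (fun k => (q - d i k) * π k) - q * p₀ ≤
          riskAdj K α (mu i) (fun k => (qb₀ i - d i k) * π k) - qb₀ i * p₀) := by
  have hKpos : (0:ℝ) < K := by exact_mod_cast Nat.lt_of_lt_of_le Nat.zero_lt_one hK
  have h1a : (0:ℝ) < 1 - α := by linarith
  set C : ℝ := (1 / ((K:ℝ) * (1 - α))) * ∑ k, |π k| with hCdef
  have hC : 0 ≤ C := by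
    rw [hCdef]
    exact mul_nonneg (by positivity) (Finset.sum_nonneg fun k _ => abs_nonneg _)
  have hcs : ∀ j, ConcaveOn ℝ Set.univ
      (fun q => riskAdj K α (lam j) (fun k => (g j k - q) * π k)) := by
    intro j
    have h := EquilibriumAux.riskAdj_concaveOn hK hα0 hα1 (hlam j).2
      (fun k => g j k * π k) (fun k => -π k)
    have he : (fun q => riskAdj K α (lam j) (fun k => (g j k - q) * π k))
        = (fun q => riskAdj K α (lam j) (fun k => g j k * π k + q * (-π k))) := by
      funext q; congr 1; funext k; ring
    rw [he]; exact h
  have hcb : ∀ i, ConcaveOn ℝ Set.univ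
      (fun q => riskAdj K α (mu i) (fun k => (q - d i k) * π k)) := by
    intro i
    have h := EquilibriumAux.riskAdj_concaveOn hK hα0 hα1 (hmu i).2
      (fun k => -(d i k) * π k) (fun k => π k)
    have he : (fun q => riskAdj K α (mu i) (fun k => (q - d i k) * π k))
        = (fun q => riskAdj K α (mu i) (fun k => -(d i k) * π k + q * π k)) := by
      funext q; congr 1; funext k; ring
    rw [he]; exact h
  have hls : ∀ j (q q' : ℝ),
      riskAdj K α (lam j) (fun k => (g j k - q) * π k) ≤
        riskAdj K α (lam j) (fun k => (g j k - q') * π k) + C * |q - q'| := by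
    intro j q q'
    have h := EquilibriumAux.riskAdj_lip hK hα0 hα1 (hlam j).1 (hlam j).2
      (fun k => (g j k - q) * π k) (fun k => (g j k - q') * π k)
    have e : ∑ k, |(g j k - q) * π k - (g j k - q') * π k| = |q - q'| * ∑ k, |π k| := by
      rw [Finset.mul_sum]
      refine Finset.sum_congr rfl fun k _ => ?_
      rw [show (g j k - q) * π k - (g j k - q') * π k = (q' - q) * π k by ring,
        abs_mul, abs_sub_comm q' q]
    rw [e] at h
    rw [hCdef]
    nlinarith [h]
  have hlb : ∀ i (q q' : ℝ),
      riskAdj K α (mu i) (fun k => (q - d i k) * π k) ≤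
        riskAdj K α (mu i) (fun k => (q' - d i k) * π k) + C * |q - q'| := by
    intro i q q'
    have h := EquilibriumAux.riskAdj_lip hK hα0 hα1 (hmu i).1 (hmu i).2
      (fun k => (q - d i k) * π k) (fun k => (q' - d i k) * π k)
    have e : ∑ k, |(q - d i k) * π k - (q' - d i k) * π k| = |q - q'| * ∑ k, |π k| := by
      rw [Finset.mul_sum]
      refine Finset.sum_congr rfl fun k _ => ?_
      rw [show (q - d i k) * π k - (q' - d i k) * π k = (q - q') * π k by ring, abs_mul]
    rw [e] at h
    rw [hCdef]
    nlinarith [h]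
  exact EquilibriumAux.equilibrium_abstract qs₀ qb₀
    (fun j q => riskAdj K α (lam j) (fun k => (g j k - q) * π k))
    (fun i q => riskAdj K α (mu i) (fun k => (q - d i k) * π k))
    C hC hcs hcb hls hlb hqs₀ hqb₀ hclear hwelf
end

section
/- Strong duality for the generator's contracting problem: fix g, π : Fin K → ℝ, λ ∈ [0,1], α ∈ [0,1), p ∈ ℝ, and let Θ = { θ : Fin K → ℝ | ∑_{k} θ k = 1 and λ/K ≤ θ k ≤ λ/K + (1−λ)/(K·(1−α)) for all k }. If there exists θ ∈ Θ with ∑_{k} θ k · π k ≥ p, then sup_{q ≥ 0} [ ρ_λ(fun k => (g k − q)·π k) + q·p ] = min { ∑_{k} θ k · π k · g k | θ ∈ Θ, ∑_{k} θ k · π k ≥ p }, and the minimum on the right-hand side is attained. If no θ ∈ Θ satisfies ∑_{k} θ k · π k ≥ p, then the supremum on the left-hand side is +∞. -/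
open Finset

namespace GenDual

noncomputable def cc (K : ℕ) (α : ℝ) : ℝ := 1 / (K * (1 - α))
noncomputable def mm (K : ℕ) (α : ℝ) : ℕ := ⌈(K : ℝ) * (1 - α)⌉₊ - 1

noncomputable def wgt (K : ℕ) (α : ℝ) (j : Fin K) : ℝ :=
  if (j : ℕ) < mm K α then cc K α
  else if (j : ℕ) = mm K α then 1 - (mm K α : ℝ) * cc K α else 0

noncomputable def vert (K : ℕ) (α lam : ℝ) (σ : Equiv.Perm (Fin K)) (k : Fin K) : ℝ :=
  lam / K + (1 - lam) * wgt K α (σ.symm k)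

variable {K : ℕ} {α lam : ℝ}

lemma ht (hK : 1 ≤ K) (hα1 : α < 1) : 0 < (K : ℝ) * (1 - α) := by
  have : (0:ℝ) < K := by exact_mod_cast Nat.lt_of_lt_of_le Nat.zero_lt_one hK
  nlinarith

lemma hcc (hK : 1 ≤ K) (hα1 : α < 1) : 0 < cc K α := by
  have := ht hK hα1 (α := α); unfold cc; positivity

lemma mm_cast (hK : 1 ≤ K) (hα1 : α < 1) : (mm K α : ℝ) = (⌈(K : ℝ) * (1 - α)⌉₊ : ℝ) - 1 := by
  have h1 : 1 ≤ ⌈(K : ℝ) * (1 - α)⌉₊ := Nat.one_le_ceil_iff.mpr (ht hK hα1)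
  unfold mm
  push_cast [Nat.cast_sub h1]
  ring

lemma mm_lt (hK : 1 ≤ K) (hα1 : α < 1) : (mm K α : ℝ) < (K : ℝ) * (1 - α) := by
  rw [mm_cast hK hα1]
  have := Nat.ceil_lt_add_one (le_of_lt (ht hK hα1))
  linarith

lemma t_le_mm (hK : 1 ≤ K) (hα1 : α < 1) : (K : ℝ) * (1 - α) ≤ (mm K α : ℝ) + 1 := by
  rw [mm_cast hK hα1]
  have := Nat.le_ceil ((K : ℝ) * (1 - α))
  linarith

lemma mm_lt_K (hK : 1 ≤ K) (hα0 : 0 ≤ α) (hα1 : α < 1) : mm K α < K := by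
  have h1 : 1 ≤ ⌈(K : ℝ) * (1 - α)⌉₊ := Nat.one_le_ceil_iff.mpr (ht hK hα1)
  have h2 : ⌈(K : ℝ) * (1 - α)⌉₊ ≤ K := by
    apply Nat.ceil_le.mpr
    have : (0:ℝ) ≤ K := Nat.cast_nonneg K
    nlinarith
  unfold mm; omega

lemma wgt_nonneg (hK : 1 ≤ K) (hα1 : α < 1) (j : Fin K) : 0 ≤ wgt K α j := by
  have hc := hcc hK hα1 (α := α)
  have hm := mm_lt hK hα1 (α := α)
  have h0 := ht hK hα1 (α := α)
  unfold wgt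
  split_ifs with h1 h2
  · linarith
  · have : (mm K α : ℝ) * cc K α < 1 := by
      unfold cc
      rw [mul_one_div, div_lt_one h0]
      exact hm
    linarith
  · exact le_rfl

lemma wgt_le_cc (hK : 1 ≤ K) (hα1 : α < 1) (j : Fin K) : wgt K α j ≤ cc K α := by
  have hc := hcc hK hα1 (α := α)
  have hm := t_le_mm hK hα1 (α := α)
  have h0 := ht hK hα1 (α := α)
  unfold wgt
  split_ifs with h1 h2
  · exact le_rfl
  · have : 1 ≤ ((mm K α : ℝ) + 1) * cc K α := by
      unfold cc
      rw [mul_one_div, le_div_iff₀ h0, one_mul]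
      exact hm
    nlinarith
  · linarith

lemma sum_ite_fin (hmK : mm K α < K) (r₁ r₂ : ℝ) :
    ∑ j : Fin K, (if (j : ℕ) < mm K α then r₁ else if (j : ℕ) = mm K α then r₂ else 0)
      = (mm K α : ℝ) * r₁ + r₂ := by
  set m := mm K α with hm
  rw [Fin.sum_univ_eq_sum_range (fun i => if i < m then r₁ else if i = m then r₂ else 0) K]
  have hsplit : ∀ i ∈ Finset.range K,
      (if i < m then r₁ else if i = m then r₂ else 0)
        = (if i < m then r₁ else 0) + (if i = m then r₂ else 0) := by
    intro i _
    rcases lt_trichotomy i m with h | h | h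
    · simp [h, Nat.ne_of_lt h]
    · simp [h]
    · simp [Nat.lt_asymm h, Nat.ne_of_gt h]
  rw [Finset.sum_congr rfl hsplit, Finset.sum_add_distrib]
  have h1 : ∑ i ∈ Finset.range K, (if i < m then r₁ else 0) = (m : ℝ) * r₁ := by
    rw [← Finset.sum_subset (Finset.range_subset_range.mpr hmK.le)
      (fun x _ hx => if_neg (by simpa using hx))]
    rw [Finset.sum_congr rfl (fun x hx => if_pos (Finset.mem_range.mp hx))]
    simp [mul_comm]
  have h2 : ∑ i ∈ Finset.range K, (if i = m then r₂ else 0) = r₂ := by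
    rw [Finset.sum_ite_eq' (Finset.range K) m (fun _ => r₂)]
    simp [hmK]
  rw [h1, h2]

lemma sum_wgt (hK : 1 ≤ K) (hα0 : 0 ≤ α) (hα1 : α < 1) : ∑ j : Fin K, wgt K α j = 1 := by
  unfold wgt
  rw [sum_ite_fin (mm_lt_K hK hα0 hα1)]
  ring

/-- Weak duality bound. -/
lemma WB (hK : 1 ≤ K) (lam' : ℝ)
    (x θ : Fin K → ℝ) (hsum : ∑ k, θ k = 1)
    (hb : ∀ k, lam' / K ≤ θ k ∧ θ k ≤ lam' / K + (1 - lam') * cc K α) (a : ℝ) :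
    lam' * ((1 / K) * ∑ k, x k) + (1 - lam') * (a + cc K α * ∑ k, min (x k - a) 0)
      ≤ ∑ k, θ k * x k := by
  have hKR : (0:ℝ) < K := by exact_mod_cast Nat.lt_of_lt_of_le Nat.zero_lt_one hK
  have key : ∀ k, (1 - lam') * cc K α * min (x k - a) 0 ≤ (θ k - lam' / K) * (x k - a) := by
    intro k
    rcases le_total a (x k) with h | h
    · rw [min_eq_right (by linarith)]
      have h1 : 0 ≤ θ k - lam' / K := by linarith [(hb k).1]
      nlinarith
    · rw [min_eq_left (by linarith)]
      have h2 : θ k - lam' / K ≤ (1 - lam') * cc K α := by linarith [(hb k).2]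
      nlinarith
  have hsum2 : (1 - lam') * cc K α * ∑ k, min (x k - a) 0
      ≤ ∑ k, (θ k - lam' / K) * (x k - a) := by
    rw [Finset.mul_sum]
    exact Finset.sum_le_sum (fun k _ => key k)
  have hexp : ∑ k, (θ k - lam' / K) * (x k - a)
      = ∑ k, θ k * x k - a * (∑ k, θ k) - (lam' / K) * ∑ k, x k + (K : ℝ) * (lam' / K * a) := by
    have : ∀ k : Fin K, (θ k - lam' / K) * (x k - a)
        = θ k * x k - a * θ k + (-((lam' / K) * x k) + lam' / K * a) := fun k => by ring
    rw [Finset.sum_congr rfl (fun k _ => this k)]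
    simp only [Finset.sum_add_distrib, Finset.sum_sub_distrib, Finset.sum_neg_distrib,
      ← Finset.mul_sum, Finset.sum_const, card_univ, Fintype.card_fin, nsmul_eq_mul]
    ring
  rw [hsum] at hexp
  have hK' : (K : ℝ) * (lam' / K * a) = lam' * a := by field_simp
  have hmean : lam' * ((1 / K : ℝ) * ∑ k, x k) = (lam' / K) * ∑ k, x k := by ring
  nlinarith [hsum2, hexp]

lemma cvar_exists (hK : 1 ≤ K) (hα0 : 0 ≤ α) (hα1 : α < 1) (x : Fin K → ℝ) :
    ∃ σ : Equiv.Perm (Fin K),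
      CVaR K α x = ∑ k, wgt K α (σ.symm k) * x k ∧
      ∃ a : ℝ, CVaR K α x = a + cc K α * ∑ k, min (x k - a) 0 := by
  set σ := Tuple.sort x with hσ
  have mono : Monotone (x ∘ σ) := Tuple.monotone_sort x
  set m := mm K α with hm
  have hmK : m < K := mm_lt_K hK hα0 hα1
  set jm : Fin K := ⟨m, hmK⟩ with hjm
  set aS : ℝ := x (σ jm) with haS
  set w : Fin K → ℝ := fun k => wgt K α (σ.symm k) with hw
  have hwsum : ∑ k, w k = 1 := by
    rw [hw]
    rw [Equiv.sum_comp σ.symm (wgt K α)]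
    exact sum_wgt hK hα0 hα1
  have hwb : ∀ k, (0:ℝ) / K ≤ w k ∧ w k ≤ (0:ℝ) / K + (1 - 0) * cc K α := by
    intro k
    constructor
    · simpa using wgt_nonneg hK hα1 (σ.symm k)
    · simpa using wgt_le_cc hK hα1 (σ.symm k)
  have weak : ∀ a : ℝ, a + cc K α * ∑ k, min (x k - a) 0 ≤ ∑ k, w k * x k := by
    intro a
    have := WB hK 0 x w hwsum hwb a
    simpa using this
  have hwgt : ∀ j : Fin K, wgt K α j
      = if (j : ℕ) < m then cc K α else if (j : ℕ) = m then 1 - (m:ℝ) * cc K α else 0 :=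
    fun j => rfl
  -- pointwise identity
  have step0 : ∀ j : Fin K,
      wgt K α j * x (σ j) - cc K α * min (x (σ j) - aS) 0
        = (if (j : ℕ) < m then cc K α * aS else if (j : ℕ) = m then (1 - (m:ℝ) * cc K α) * aS else 0) := by
    intro j
    rcases lt_trichotomy (j : ℕ) m with h | h | h
    · have hle : x (σ j) ≤ aS := mono (show j ≤ jm from Fin.mk_le_of_le_val h.le)
      rw [min_eq_left (by linarith)]
      rw [if_pos h, hwgt j, if_pos h]
      ring
    · have hj : j = jm := Fin.ext h
      rw [if_neg (by omega), if_pos h, hwgt j, if_neg (by omega), if_pos h, hj]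
      simp only [haS, sub_self]
      rw [min_self]
      ring
    · have hge : aS ≤ x (σ j) := mono (show jm ≤ j from Fin.mk_le_of_le_val h.le)
      rw [min_eq_right (by linarith)]
      rw [if_neg (by omega), if_neg (by omega), hwgt j, if_neg (by omega), if_neg (by omega)]
      ring
  have step1 : ∑ j, wgt K α j * x (σ j) - cc K α * ∑ j, min (x (σ j) - aS) 0 = aS := by
    rw [Finset.mul_sum, ← Finset.sum_sub_distrib]
    rw [Finset.sum_congr rfl (fun j _ => step0 j)]
    rw [show ∀ r₁ r₂ : ℝ, ∑ j : Fin K, (if (j : ℕ) < m then r₁ else if (j : ℕ) = m then r₂ else 0)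
      = (m : ℝ) * r₁ + r₂ from fun r₁ r₂ => sum_ite_fin hmK r₁ r₂]
    ring
  have e1 : ∑ j, min (x (σ j) - aS) 0 = ∑ k, min (x k - aS) 0 :=
    Equiv.sum_comp σ (fun k => min (x k - aS) 0)
  have e2 : ∑ j, wgt K α j * x (σ j) = ∑ k, w k * x k := by
    have := Equiv.sum_comp σ (fun k => w k * x k)
    rw [← this]
    apply Finset.sum_congr rfl
    intro j _
    simp [hw]
  have hval : aS + cc K α * ∑ k, min (x k - aS) 0 = ∑ k, w k * x k := by
    rw [← e1, ← e2]; linarith [step1]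
  have hmem : aS + (1 / ((K:ℝ) * (1 - α))) * ∑ k, min (x k - aS) 0
      ∈ {v : ℝ | ∃ a : ℝ, v = a + (1 / (K * (1 - α))) * ∑ k, min (x k - a) 0} := ⟨aS, rfl⟩
  have hcc_eq : (1 / ((K:ℝ) * (1 - α))) = cc K α := rfl
  have hbdd : BddAbove {v : ℝ | ∃ a : ℝ, v = a + (1 / ((K:ℝ) * (1 - α))) * ∑ k, min (x k - a) 0} := by
    refine ⟨∑ k, w k * x k, ?_⟩
    rintro v ⟨a, rfl⟩
    rw [hcc_eq]
    exact weak a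
  have le1 : aS + cc K α * ∑ k, min (x k - aS) 0 ≤ CVaR K α x := by
    rw [← hcc_eq]
    exact le_csSup hbdd hmem
  have le2 : CVaR K α x ≤ ∑ k, w k * x k := by
    apply csSup_le ⟨_, hmem⟩
    rintro v ⟨a, rfl⟩
    rw [hcc_eq]
    exact weak a
  have heq : CVaR K α x = ∑ k, w k * x k := le_antisymm le2 (hval ▸ le1)
  exact ⟨σ, heq, aS, by rw [heq, ← hval]⟩

lemma ub_eq (hK : 1 ≤ K) (hα1 : α < 1) :
    lam / K + (1 - lam) / ((K:ℝ) * (1 - α)) = lam / K + (1 - lam) * cc K α := by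
  unfold cc; ring

/-- vert σ is a feasible dual point. -/
lemma vert_mem (hK : 1 ≤ K) (hα0 : 0 ≤ α) (hα1 : α < 1)
    (hlam0 : 0 ≤ lam) (hlam1 : lam ≤ 1) (σ : Equiv.Perm (Fin K)) :
    (∑ k, vert K α lam σ k) = 1 ∧
      (∀ k, lam / K ≤ vert K α lam σ k ∧
        vert K α lam σ k ≤ lam / K + (1 - lam) / ((K:ℝ) * (1 - α))) := by
  have hKR : (0:ℝ) < K := by exact_mod_cast Nat.lt_of_lt_of_le Nat.zero_lt_one hK
  constructor
  · unfold vert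
    rw [Finset.sum_add_distrib, ← Finset.mul_sum, Equiv.sum_comp σ.symm (wgt K α),
      sum_wgt hK hα0 hα1, Finset.sum_const, card_univ, Fintype.card_fin, nsmul_eq_mul]
    field_simp
    ring
  · intro k
    have h1 := wgt_nonneg hK hα1 (σ.symm k)
    have h2 := wgt_le_cc hK hα1 (σ.symm k)
    rw [ub_eq hK hα1]
    unfold vert
    constructor
    · nlinarith
    · nlinarith

/-- `riskAdj` equals its value at some dual vertex. -/
lemma riskAdj_eq (hK : 1 ≤ K) (hα0 : 0 ≤ α) (hα1 : α < 1) (x : Fin K → ℝ) :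
    ∃ σ : Equiv.Perm (Fin K), riskAdj K α lam x = ∑ k, vert K α lam σ k * x k := by
  obtain ⟨σ, h1, _⟩ := cvar_exists hK hα0 hα1 x
  refine ⟨σ, ?_⟩
  unfold riskAdj vert
  rw [h1]
  have : ∀ k : Fin K, (lam / K + (1 - lam) * wgt K α (σ.symm k)) * x k
      = (lam / K) * x k + (1 - lam) * (wgt K α (σ.symm k) * x k) := fun k => by ring
  rw [Finset.sum_congr rfl (fun k _ => this k), Finset.sum_add_distrib,
    ← Finset.mul_sum, ← Finset.mul_sum]
  ring

/-- `riskAdj` is a lower bound over the dual feasible set. -/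
lemma riskAdj_le (hK : 1 ≤ K) (hα0 : 0 ≤ α) (hα1 : α < 1)
    (x θ : Fin K → ℝ) (hsum : ∑ k, θ k = 1)
    (hb : ∀ k, lam / K ≤ θ k ∧ θ k ≤ lam / K + (1 - lam) / ((K:ℝ) * (1 - α))) :
    riskAdj K α lam x ≤ ∑ k, θ k * x k := by
  obtain ⟨σ, h1, a, h2⟩ := cvar_exists hK hα0 hα1 x
  have hb' : ∀ k, lam / K ≤ θ k ∧ θ k ≤ lam / K + (1 - lam) * cc K α := by
    intro k; rw [← ub_eq hK hα1]; exact hb k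
  have := WB hK lam x θ hsum hb' a
  unfold riskAdj
  rw [h2]
  exact this

end GenDual

open GenDual in
/-- Strong duality for the generator's contracting problem (primal-dual equality (24)):
if the dual feasible set `{θ ∈ Θ | ∑ₖ θ k · π k ≥ p}` is nonempty, the supremum of the
generator's objective over `q ≥ 0` equals the attained minimum of `∑ₖ θ k · π k · g k`
over it; otherwise the generator's objective is unbounded above. -/
theorem generator_strong_duality (K : ℕ) (hK : 1 ≤ K)
    (α : ℝ) (hα0 : 0 ≤ α) (hα1 : α < 1)
    (lam : ℝ) (hlam0 : 0 ≤ lam) (hlam1 : lam ≤ 1)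
    (g π : Fin K → ℝ) (p : ℝ) :
    ((∃ θ : Fin K → ℝ, (∑ k, θ k) = 1 ∧
        (∀ k, lam / K ≤ θ k ∧ θ k ≤ lam / K + (1 - lam) / (K * (1 - α))) ∧
        p ≤ ∑ k, θ k * π k) →
      ∃ V : ℝ,
        IsLeast
          {v : ℝ | ∃ θ : Fin K → ℝ, (∑ k, θ k) = 1 ∧
            (∀ k, lam / K ≤ θ k ∧ θ k ≤ lam / K + (1 - lam) / (K * (1 - α))) ∧
            p ≤ (∑ k, θ k * π k) ∧ v = ∑ k, θ k * π k * g k} V ∧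
        IsLUB
          {v : ℝ | ∃ q : ℝ, 0 ≤ q ∧
            v = riskAdj K α lam (fun k => (g k - q) * π k) + q * p} V) ∧
    ((¬ ∃ θ : Fin K → ℝ, (∑ k, θ k) = 1 ∧
        (∀ k, lam / K ≤ θ k ∧ θ k ≤ lam / K + (1 - lam) / (K * (1 - α))) ∧
        p ≤ ∑ k, θ k * π k) →
      ¬ BddAbove
        {v : ℝ | ∃ q : ℝ, 0 ≤ q ∧
          v = riskAdj K α lam (fun k => (g k - q) * π k) + q * p}) := by
  -- notation
  set A : Equiv.Perm (Fin K) → ℝ := fun σ => ∑ k, vert K α lam σ k * π k * g k with hA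
  set B : Equiv.Perm (Fin K) → ℝ := fun σ => p - ∑ k, vert K α lam σ k * π k with hB
  -- the primal objective is given by a vertex line
  have hline : ∀ q : ℝ, ∃ σ : Equiv.Perm (Fin K),
      riskAdj K α lam (fun k => (g k - q) * π k) + q * p = A σ + q * B σ := by
    intro q
    obtain ⟨σ, hσ⟩ := riskAdj_eq hK hα0 hα1 (lam := lam) (fun k => (g k - q) * π k)
    refine ⟨σ, ?_⟩
    rw [hσ]
    have : ∀ k : Fin K, vert K α lam σ k * ((g k - q) * π k)
        = vert K α lam σ k * π k * g k - q * (vert K α lam σ k * π k) := fun k => by ring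
    rw [Finset.sum_congr rfl (fun k _ => this k), Finset.sum_sub_distrib, ← Finset.mul_sum,
      hA, hB]
    ring
  -- the primal objective is below every dual line
  have hle_gen : ∀ (q : ℝ) (θ : Fin K → ℝ), (∑ k, θ k) = 1 →
      (∀ k, lam / K ≤ θ k ∧ θ k ≤ lam / K + (1 - lam) / ((K:ℝ) * (1 - α))) →
      riskAdj K α lam (fun k => (g k - q) * π k) + q * p
        ≤ (∑ k, θ k * π k * g k) + q * (p - ∑ k, θ k * π k) := by
    intro q θ h1 h2
    have hle := riskAdj_le hK hα0 hα1 (fun k => (g k - q) * π k) θ h1 h2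
    have hre : ∑ k, θ k * ((g k - q) * π k)
        = (∑ k, θ k * π k * g k) - q * ∑ k, θ k * π k := by
      have : ∀ k : Fin K, θ k * ((g k - q) * π k)
          = θ k * π k * g k - q * (θ k * π k) := fun k => by ring
      rw [Finset.sum_congr rfl (fun k _ => this k), Finset.sum_sub_distrib, ← Finset.mul_sum]
    rw [hre] at hle
    linarith
  constructor
  · -- feasible case
    rintro ⟨θ₀, h01, h02, h03⟩
    set Tset : Set (Fin K → ℝ) := {θ | (∑ k, θ k) = 1 ∧
      (∀ k, lam / K ≤ θ k ∧ θ k ≤ lam / K + (1 - lam) / ((K:ℝ) * (1 - α))) ∧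
      p ≤ ∑ k, θ k * π k} with hTset
    have hcont_sum : Continuous fun θ : Fin K → ℝ => ∑ k, θ k :=
      continuous_finset_sum _ (fun k _ => continuous_apply k)
    have hcont_c : Continuous fun θ : Fin K → ℝ => ∑ k, θ k * π k :=
      continuous_finset_sum _ (fun k _ => (continuous_apply k).mul continuous_const)
    have hcont_o : Continuous fun θ : Fin K → ℝ => ∑ k, θ k * π k * g k :=
      continuous_finset_sum _ (fun k _ => ((continuous_apply k).mul continuous_const).mul
        continuous_const)
    have hclosed : IsClosed Tset := by
      have hT2 : Tset = ({θ : Fin K → ℝ | (∑ k, θ k) = 1} ∩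
          (⋂ k : Fin K, ({θ : Fin K → ℝ | lam / K ≤ θ k} ∩
            {θ : Fin K → ℝ | θ k ≤ lam / K + (1 - lam) / ((K:ℝ) * (1 - α))}))) ∩
          {θ : Fin K → ℝ | p ≤ ∑ k, θ k * π k} := by
        ext θ
        simp only [hTset, Set.mem_setOf_eq, Set.mem_inter_iff, Set.mem_iInter]
        tauto
      rw [hT2]
      refine IsClosed.inter (IsClosed.inter ?_ ?_) ?_
      · exact isClosed_eq hcont_sum continuous_const
      · exact isClosed_iInter fun k => (isClosed_le continuous_const (continuous_apply k)).inter
          (isClosed_le (continuous_apply k) continuous_const)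
      · exact isClosed_le continuous_const hcont_c
    have hsub : Tset ⊆ Set.Icc (fun _ => lam / K)
        (fun _ => lam / K + (1 - lam) / ((K:ℝ) * (1 - α))) := by
      intro θ hθ
      rw [Set.mem_Icc]
      exact ⟨fun k => (hθ.2.1 k).1, fun k => (hθ.2.1 k).2⟩
    have hcompact : IsCompact Tset := isCompact_Icc.of_isClosed_subset hclosed hsub
    have hne : Tset.Nonempty := ⟨θ₀, h01, h02, h03⟩
    obtain ⟨θh, hθh, hmin⟩ := hcompact.exists_isMinOn hne hcont_o.continuousOn
    have hminle : ∀ θ ∈ Tset, (∑ k, θh k * π k * g k) ≤ ∑ k, θ k * π k * g k :=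
      fun θ hθ => hmin hθ
    set V : ℝ := ∑ k, θh k * π k * g k with hV
    refine ⟨V, ⟨⟨θh, hθh.1, hθh.2.1, hθh.2.2, rfl⟩, ?_⟩, ?_, ?_⟩
    · rintro v ⟨θ, h1, h2, h3, rfl⟩
      exact hminle θ ⟨h1, h2, h3⟩
    · -- upper bound
      rintro v ⟨q, hq, rfl⟩
      have h1 := hle_gen q θh hθh.1 hθh.2.1
      have h2 : q * (p - ∑ k, θh k * π k) ≤ 0 :=
        mul_nonpos_of_nonneg_of_nonpos hq (by linarith [hθh.2.2])
      linarith
    · -- least upper bound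
      intro U hU
      have hVA : ∀ σ : Equiv.Perm (Fin K), B σ ≤ 0 → V ≤ A σ := by
        intro σ hBσ
        have hv := vert_mem hK hα0 hα1 hlam0 hlam1 (lam := lam) σ
        exact hminle (vert K α lam σ) ⟨hv.1, hv.2, by simp only [hB] at hBσ; linarith⟩
      have hcross : ∀ σ τ : Equiv.Perm (Fin K), 0 < B σ → B τ < 0 →
          (V - A σ) / B σ ≤ (A τ - V) / (-B τ) := by
        intro σ τ hBσ hBτ
        set μ : ℝ := (-B τ) / (B σ - B τ) with hμ
        have hden : 0 < B σ - B τ := by linarith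
        have hμ0 : 0 ≤ μ := by
          rw [hμ]
          apply div_nonneg (by linarith) (by linarith)
        have hμ1 : μ ≤ 1 := by
          rw [hμ, div_le_one hden]; linarith
        set θμ : Fin K → ℝ := fun k => μ * vert K α lam σ k + (1 - μ) * vert K α lam τ k with hθμ
        have hvσ := vert_mem hK hα0 hα1 hlam0 hlam1 (lam := lam) σ
        have hvτ := vert_mem hK hα0 hα1 hlam0 hlam1 (lam := lam) τ
        have hsumμ : ∑ k, θμ k = 1 := by
          simp only [hθμ]
          rw [Finset.sum_add_distrib, ← Finset.mul_sum, ← Finset.mul_sum, hvσ.1, hvτ.1]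
          ring
        have hbμ : ∀ k, lam / K ≤ θμ k ∧
            θμ k ≤ lam / K + (1 - lam) / ((K:ℝ) * (1 - α)) := by
          intro k
          have h1 := (hvσ.2 k).1
          have h2 := (hvσ.2 k).2
          have h3 := (hvτ.2 k).1
          have h4 := (hvτ.2 k).2
          constructor
          · simp only [hθμ]; nlinarith
          · simp only [hθμ]; nlinarith
        have hcμ : ∑ k, θμ k * π k = μ * (∑ k, vert K α lam σ k * π k)
            + (1 - μ) * (∑ k, vert K α lam τ k * π k) := by
          simp only [hθμ]
          rw [Finset.mul_sum, Finset.mul_sum, ← Finset.sum_add_distrib]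
          exact Finset.sum_congr rfl (fun k _ => by ring)
        have hoμ : ∑ k, θμ k * π k * g k = μ * A σ + (1 - μ) * A τ := by
          simp only [hθμ, hA]
          rw [Finset.mul_sum, Finset.mul_sum, ← Finset.sum_add_distrib]
          exact Finset.sum_congr rfl (fun k _ => by ring)
        have hμdef : μ * (B σ - B τ) = -B τ := by
          rw [hμ, div_mul_eq_mul_div, mul_div_assoc, div_self hden.ne', mul_one]
        have hBcomb : μ * B σ + (1 - μ) * B τ = 0 := by linear_combination hμdef
        have hfeasμ : p ≤ ∑ k, θμ k * π k := by
          rw [hcμ]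
          have : μ * B σ + (1 - μ) * B τ
              = p - (μ * (∑ k, vert K α lam σ k * π k)
                + (1 - μ) * (∑ k, vert K α lam τ k * π k)) := by
            simp only [hB]; ring
          rw [this] at hBcomb
          linarith
        have hVμ : V ≤ μ * A σ + (1 - μ) * A τ := by
          rw [← hoμ]
          exact hminle θμ ⟨hsumμ, hbμ, hfeasμ⟩
        rw [div_le_div_iff₀ hBσ (by linarith : (0:ℝ) < -B τ)]
        have h7 : V * (B σ - B τ) ≤ (μ * A σ + (1 - μ) * A τ) * (B σ - B τ) :=
          mul_le_mul_of_nonneg_right hVμ hden.le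
        have h8 : (μ * A σ + (1 - μ) * A τ) * (B σ - B τ) = A σ * (-B τ) + A τ * B σ := by
          linear_combination (A σ - A τ) * hμdef
        nlinarith [h7, h8]
      -- construct the multiplier
      have hPne : (Finset.univ : Finset (Equiv.Perm (Fin K))).Nonempty := Finset.univ_nonempty
      set f : Equiv.Perm (Fin K) → ℝ :=
        fun σ => if 0 < B σ then max ((V - A σ) / B σ) 0 else 0 with hf
      set qs : ℝ := Finset.univ.sup' hPne f with hqs
      have hf0 : ∀ σ, 0 ≤ f σ := by
        intro σ
        simp only [hf]
        split_ifs
        · exact le_max_right _ _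
        · exact le_rfl
      obtain ⟨τ, _, hτ⟩ := Finset.exists_mem_eq_sup' hPne f
      have hq0 : 0 ≤ qs := by
        rw [hqs, hτ]; exact hf0 τ
      have hlines : ∀ σ : Equiv.Perm (Fin K), V ≤ A σ + qs * B σ := by
        intro σ
        rcases lt_trichotomy (B σ) 0 with h | h | h
        · -- need qs ≤ (A σ - V)/(-B σ)
          have hub : qs ≤ (A σ - V) / (-B σ) := by
            rw [hqs, hτ]
            simp only [hf]
            have hnn : 0 ≤ (A σ - V) / (-B σ) :=
              div_nonneg (by linarith [hVA σ h.le]) (by linarith)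
            split_ifs with hBτpos
            · exact max_le (hcross τ σ hBτpos h) hnn
            · exact hnn
          have := (le_div_iff₀ (by linarith : (0:ℝ) < -B σ)).mp hub
          nlinarith
        · rw [h]
          have := hVA σ h.le
          linarith
        · have hge : (V - A σ) / B σ ≤ qs := by
            rw [hqs]
            refine le_trans ?_ (Finset.le_sup' f (Finset.mem_univ σ))
            simp only [hf]
            rw [if_pos h]
            exact le_max_left _ _
          have := (div_le_iff₀ h).mp hge
          linarith
      obtain ⟨σs, hσs⟩ := hline qs
      have hmemS : riskAdj K α lam (fun k => (g k - qs) * π k) + qs * p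
          ∈ {v : ℝ | ∃ q : ℝ, 0 ≤ q ∧
            v = riskAdj K α lam (fun k => (g k - q) * π k) + q * p} := ⟨qs, hq0, rfl⟩
      have := hU hmemS
      rw [hσs] at this
      linarith [hlines σs]
  · -- infeasible case
    intro hno hbdd
    obtain ⟨U, hU⟩ := hbdd
    have hBpos : ∀ σ : Equiv.Perm (Fin K), 0 < B σ := by
      intro σ
      by_contra hcon
      push_neg at hcon
      have hv := vert_mem hK hα0 hα1 hlam0 hlam1 (lam := lam) σ
      exact hno ⟨vert K α lam σ, hv.1, hv.2, by simp only [hB] at hcon; linarith⟩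
    have hPne : (Finset.univ : Finset (Equiv.Perm (Fin K))).Nonempty := Finset.univ_nonempty
    set Amin : ℝ := Finset.univ.inf' hPne A with hAmin
    set Bmin : ℝ := Finset.univ.inf' hPne B with hBmin
    have hBminpos : 0 < Bmin := by
      rw [hBmin, Finset.lt_inf'_iff]
      exact fun σ _ => hBpos σ
    set q : ℝ := max 0 ((U + 1 - Amin) / Bmin) with hq
    have hq0 : 0 ≤ q := le_max_left _ _
    obtain ⟨σs, hσs⟩ := hline q
    have hmemS : riskAdj K α lam (fun k => (g k - q) * π k) + q * p
        ∈ {v : ℝ | ∃ q' : ℝ, 0 ≤ q' ∧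
          v = riskAdj K α lam (fun k => (g k - q') * π k) + q' * p} := ⟨q, hq0, rfl⟩
    have h1 : riskAdj K α lam (fun k => (g k - q) * π k) + q * p ≤ U := hU hmemS
    have h2 : Amin ≤ A σs := Finset.inf'_le A (Finset.mem_univ σs)
    have h3 : Bmin ≤ B σs := Finset.inf'_le B (Finset.mem_univ σs)
    have h4 : (U + 1 - Amin) / Bmin ≤ q := le_max_right _ _
    have h5 : U + 1 - Amin ≤ q * Bmin := (div_le_iff₀ hBminpos).mp h4
    have h6 : q * Bmin ≤ q * B σs := mul_le_mul_of_nonneg_left h3 hq0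
    rw [hσs] at h1
    linarith
end

section
/- Strong duality for the load's contracting problem: fix d, π : Fin K → ℝ, λ ∈ [0,1], α ∈ [0,1), p ∈ ℝ, and let Θ = { θ : Fin K → ℝ | ∑_{k} θ k = 1 and λ/K ≤ θ k ≤ λ/K + (1−λ)/(K·(1−α)) for all k }. If there exists θ ∈ Θ with ∑_{k} θ k · π k ≤ p, then sup_{q ≥ 0} [ ρ_λ(fun k => (q − d k)·π k) − q·p ] = min { −∑_{k} θ k · π k · d k | θ ∈ Θ, ∑_{k} θ k · π k ≤ p }, and the minimum on the right-hand side is attained. If no θ ∈ Θ satisfies ∑_{k} θ k · π k ≤ p, then the supremum on the left-hand side is +∞. -/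
open Finset

/-- weak duality pointwise bound for CVaR -/
lemma cvar_pointwise (K : ℕ) (α : ℝ) (x μ : Fin K → ℝ) (a : ℝ)
    (hsum : (∑ k, μ k) = 1) (hb : ∀ k, 0 ≤ μ k ∧ μ k ≤ 1 / (K * (1 - α))) :
    a + (1 / (K * (1 - α))) * ∑ k, min (x k - a) 0 ≤ ∑ k, μ k * x k := by
  set c := 1 / ((K : ℝ) * (1 - α)) with hc
  have h1 : ∀ k, c * min (x k - a) 0 ≤ μ k * (x k - a) := by
    intro k
    rcases le_or_gt 0 (x k - a) with h | h
    · rw [min_eq_right h]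
      simpa using mul_nonneg (hb k).1 h
    · rw [min_eq_left h.le]
      nlinarith [(hb k).2, h]
  have h2 : c * ∑ k, min (x k - a) 0 ≤ ∑ k, μ k * (x k - a) := by
    rw [mul_sum]; exact sum_le_sum fun k _ => h1 k
  have h3 : ∑ k, μ k * (x k - a) = (∑ k, μ k * x k) - a := by
    have : ∀ k ∈ univ, μ k * (x k - a) = μ k * x k - a * μ k := fun k _ => by ring
    rw [sum_congr rfl this, sum_sub_distrib, ← mul_sum, hsum, mul_one]
  linarith

lemma cvar_key (K : ℕ) (hK : 1 ≤ K) (α : ℝ) (hα0 : 0 ≤ α) (hα1 : α < 1) (x : Fin K → ℝ) :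
    ∃ μ : Fin K → ℝ, (∑ k, μ k) = 1 ∧ (∀ k, 0 ≤ μ k ∧ μ k ≤ 1 / (K * (1 - α))) ∧
      CVaR K α x = ∑ k, μ k * x k := by
  haveI : NeZero K := ⟨by omega⟩
  have hKpos : (0 : ℝ) < K := by exact_mod_cast Nat.pos_of_ne_zero (by omega)
  have h1α : (0 : ℝ) < 1 - α := by linarith
  set c := 1 / ((K : ℝ) * (1 - α)) with hc
  have hcpos : 0 < c := by positivity
  have hcK : 1 ≤ c * K := by
    have h1 : c * K = 1 / (1 - α) := by field_simp [hc]; rw [hc]; field_simp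
    rw [h1]
    rw [le_div_iff₀ h1α]
    linarith
  -- choose the threshold a* as the smallest value whose lower tail has enough mass
  set S : Finset (Fin K) :=
    univ.filter (fun k => 1 ≤ c * ((univ.filter fun j => x j ≤ x k).card : ℝ)) with hS
  have hSne : S.Nonempty := by
    obtain ⟨k₀, -, hk₀⟩ := Finset.exists_max_image univ x univ_nonempty
    refine ⟨k₀, ?_⟩
    rw [hS, mem_filter]
    refine ⟨mem_univ _, ?_⟩
    have hfil : (univ.filter fun j => x j ≤ x k₀) = univ :=
      filter_true_of_mem fun j _ => hk₀ j (mem_univ j)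
    rw [hfil, card_univ, Fintype.card_fin]
    exact hcK
  obtain ⟨kst, hkstS, hkstmin⟩ := S.exists_min_image x hSne
  set astar := x kst with hastar
  set A : Finset (Fin K) := univ.filter (fun k => x k < astar) with hA
  set E : Finset (Fin K) := univ.filter (fun k => x k = astar) with hE
  have hle : 1 ≤ c * ((univ.filter fun j => x j ≤ astar).card : ℝ) := by
    have := (mem_filter.mp hkstS).2
    simpa [hastar] using this
  have hlt : c * (A.card : ℝ) < 1 := by
    by_contra h
    push_neg at h
    have hAne : A.Nonempty := by
      rw [← card_pos]
      by_contra h0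
      push_neg at h0
      interval_cases hcard : A.card
      · simp at h; linarith
    obtain ⟨k', hk'A, hk'max⟩ := A.exists_max_image x hAne
    have hsub : A ⊆ univ.filter fun j => x j ≤ x k' := fun j hj =>
      mem_filter.mpr ⟨mem_univ _, hk'max j hj⟩
    have hcard : (A.card : ℝ) ≤ ((univ.filter fun j => x j ≤ x k').card : ℝ) := by
      exact_mod_cast card_le_card hsub
    have hk'S : k' ∈ S := by
      rw [hS, mem_filter]
      refine ⟨mem_univ _, ?_⟩
      nlinarith
    have h1 := hkstmin k' hk'S
    have h2 : x k' < astar := (mem_filter.mp hk'A).2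
    linarith
  have hkstE : kst ∈ E := mem_filter.mpr ⟨mem_univ _, rfl⟩
  have hEcard : (0 : ℝ) < E.card := by
    exact_mod_cast card_pos.mpr ⟨kst, hkstE⟩
  have hdisj : Disjoint A E := by
    rw [disjoint_left]
    intro k hkA hkE
    have h1 := (mem_filter.mp hkA).2
    have h2 := (mem_filter.mp hkE).2
    rw [h2] at h1; exact lt_irrefl _ h1
  have hunion : (univ.filter fun j => x j ≤ astar) = A ∪ E := by
    ext k
    simp only [hA, hE, mem_filter, mem_union, mem_univ, true_and]
    constructor
    · intro h; rcases lt_or_eq_of_le h with h | h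
      · exact Or.inl h
      · exact Or.inr h
    · rintro (h | h); exacts [h.le, h.le]
  have hcards : ((univ.filter fun j => x j ≤ astar).card : ℝ) = A.card + E.card := by
    rw [hunion, card_union_of_disjoint hdisj]; push_cast; ring
  set m : ℝ := 1 - c * A.card with hm
  have hm0 : 0 < m := by rw [hm]; linarith
  have hmE : m ≤ c * E.card := by rw [hm]; rw [hcards] at hle; nlinarith
  set μ : Fin K → ℝ := fun k =>
    if x k < astar then c else if x k = astar then m / E.card else 0 with hμ
  have hsumg : ∀ g : Fin K → ℝ,
      ∑ k, μ k * g k = c * ∑ k ∈ A, g k + (m / E.card) * ∑ k ∈ E, g k := by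
    intro g
    have hz : ∀ k ∈ univ, k ∉ A ∪ E → μ k * g k = 0 := by
      intro k _ hk
      have h1 : ¬ x k < astar := fun h => hk (mem_union_left _ (by simp [hA, h]))
      have h2 : ¬ x k = astar := fun h => hk (mem_union_right _ (by simp [hE, h]))
      simp [hμ, h1, h2]
    rw [← Finset.sum_subset (subset_univ (A ∪ E)) hz, Finset.sum_union hdisj]
    congr 1
    · rw [mul_sum]
      refine sum_congr rfl fun k hk => ?_
      have h1 : x k < astar := (mem_filter.mp hk).2
      simp [hμ, h1]
    · rw [mul_sum]
      refine sum_congr rfl fun k hk => ?_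
      have h1 : x k = astar := (mem_filter.mp hk).2
      have h2 : ¬ x k < astar := by rw [h1]; exact lt_irrefl _
      simp [hμ, h1, h2]
  have hEne : (E.card : ℝ) ≠ 0 := ne_of_gt hEcard
  have hμsum : (∑ k, μ k) = 1 := by
    have := hsumg (fun _ => 1)
    simp only [mul_one] at this
    rw [this, sum_const, sum_const, nsmul_eq_mul, nsmul_eq_mul, mul_one, mul_one]
    field_simp [hm]
    linarith
  have hμb : ∀ k, 0 ≤ μ k ∧ μ k ≤ c := by
    intro k
    simp only [hμ]
    split_ifs with h1 h2
    · exact ⟨hcpos.le, le_refl _⟩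
    · constructor
      · exact div_nonneg hm0.le hEcard.le
      · rw [div_le_iff₀ hEcard]; nlinarith
    · exact ⟨le_refl _, hcpos.le⟩
  have hEsum : ∑ k ∈ E, x k = E.card * astar := by
    rw [sum_congr rfl fun k hk => (mem_filter.mp hk).2, sum_const, nsmul_eq_mul]
  have hminsum : ∑ k, min (x k - astar) 0 = ∑ k ∈ A, (x k - astar) := by
    rw [← Finset.sum_subset (subset_univ A) (fun k _ hk => ?_)]
    · exact sum_congr rfl fun k hk => min_eq_left (by
        have := (mem_filter.mp hk).2; linarith)
    · have h1 : ¬ x k < astar := fun h => hk (mem_filter.mpr ⟨mem_univ _, h⟩)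
      push_neg at h1
      exact min_eq_right (by linarith)
  have hval : ∑ k, μ k * x k = astar + c * ∑ k, min (x k - astar) 0 := by
    rw [hsumg x, hminsum, hEsum, sum_sub_distrib, sum_const, nsmul_eq_mul]
    field_simp
    ring
  refine ⟨μ, hμsum, hμb, ?_⟩
  have hG : IsGreatest
      {v : ℝ | ∃ a : ℝ, v = a + (1 / ((K : ℝ) * (1 - α))) * ∑ k, min (x k - a) 0}
      (∑ k, μ k * x k) := by
    constructor
    · exact ⟨astar, hval⟩
    · rintro v ⟨a, rfl⟩
      exact cvar_pointwise K α x μ a hμsum hμb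
  rw [CVaR]
  exact hG.csSup_eq

def ThetaSet (K : ℕ) (α lam : ℝ) : Set (Fin K → ℝ) :=
  {θ | (∑ k, θ k) = 1 ∧ ∀ k, lam / K ≤ θ k ∧ θ k ≤ lam / K + (1 - lam) / (K * (1 - α))}

lemma cvar_le (K : ℕ) (α : ℝ) (x μ : Fin K → ℝ)
    (hsum : (∑ k, μ k) = 1) (hb : ∀ k, 0 ≤ μ k ∧ μ k ≤ 1 / (K * (1 - α))) :
    CVaR K α x ≤ ∑ k, μ k * x k := by
  rw [CVaR]
  have hne : {v : ℝ | ∃ a : ℝ, v = a + (1 / (K * (1 - α))) * ∑ k, min (x k - a) 0}.Nonempty :=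
    ⟨0 + 1 / ((K:ℝ) * (1 - α)) * ∑ k, min (x k - 0) 0, ⟨0, rfl⟩⟩
  apply csSup_le hne
  rintro v ⟨a, rfl⟩
  exact cvar_pointwise K α x μ a hsum hb

lemma riskAdj_attained (K : ℕ) (hK : 1 ≤ K) (α : ℝ) (hα0 : 0 ≤ α) (hα1 : α < 1)
    (lam : ℝ) (hlam0 : 0 ≤ lam) (hlam1 : lam ≤ 1) (x : Fin K → ℝ) :
    ∃ θ ∈ ThetaSet K α lam, riskAdj K α lam x = ∑ k, θ k * x k := by
  have hKpos : (0 : ℝ) < K := by exact_mod_cast by omega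
  obtain ⟨μ, hμsum, hμb, hμval⟩ := cvar_key K hK α hα0 hα1 x
  refine ⟨fun k => lam / K + (1 - lam) * μ k, ⟨?_, ?_⟩, ?_⟩
  · rw [sum_add_distrib, sum_const, ← mul_sum, hμsum, card_univ, Fintype.card_fin,
      nsmul_eq_mul, mul_one]
    field_simp
    ring
  · intro k
    constructor
    · exact le_add_of_nonneg_right (mul_nonneg (by linarith) (hμb k).1)
    · have h1 : (1 - lam) * μ k ≤ (1 - lam) * (1 / (K * (1 - α))) :=
        mul_le_mul_of_nonneg_left (hμb k).2 (by linarith)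
      have h2 : (1 - lam) * (1 / ((K:ℝ) * (1 - α))) = (1 - lam) / (K * (1 - α)) :=
        mul_one_div _ _
      linarith
  · have h3 : ∑ k, (lam / K + (1 - lam) * μ k) * x k
        = lam / K * ∑ k, x k + (1 - lam) * ∑ k, μ k * x k := by
      rw [mul_sum, mul_sum, ← sum_add_distrib]
      exact sum_congr rfl fun k _ => by ring
    rw [riskAdj, hμval, h3]
    ring

lemma riskAdj_le (K : ℕ) (hK : 1 ≤ K) (α : ℝ) (hα0 : 0 ≤ α) (hα1 : α < 1)
    (lam : ℝ) (hlam0 : 0 ≤ lam) (hlam1 : lam ≤ 1) (x : Fin K → ℝ)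
    (θ : Fin K → ℝ) (hθ : θ ∈ ThetaSet K α lam) :
    riskAdj K α lam x ≤ ∑ k, θ k * x k := by
  have hKpos : (0 : ℝ) < K := by exact_mod_cast by omega
  have h1α : (0 : ℝ) < 1 - α := by linarith
  obtain ⟨hθsum, hθb⟩ := hθ
  rcases eq_or_lt_of_le hlam1 with hl1 | hl1
  · -- lam = 1 : θ is forced to be uniform
    subst hl1
    have hθk : ∀ k, θ k = 1 / K := by
      intro k
      have h1 := (hθb k).1
      have h2 := (hθb k).2
      simp only [sub_self, zero_div, add_zero] at h2
      linarith
    have h4 : ∑ k, θ k * x k = 1 / K * ∑ k, x k := by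
      rw [mul_sum]
      exact sum_congr rfl fun k _ => by rw [hθk k]
    rw [riskAdj, h4]
    norm_num
  · have h1l : (0 : ℝ) < 1 - lam := by linarith
    set μ : Fin K → ℝ := fun k => (θ k - lam / K) / (1 - lam) with hμ
    have hμsum : (∑ k, μ k) = 1 := by
      simp only [hμ, div_eq_mul_inv]
      rw [← sum_mul, sum_sub_distrib, hθsum, sum_const, card_univ, Fintype.card_fin,
        nsmul_eq_mul]
      field_simp
    have hμb : ∀ k, 0 ≤ μ k ∧ μ k ≤ 1 / (K * (1 - α)) := by
      intro k
      have h1 := (hθb k).1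
      have h2 := (hθb k).2
      constructor
      · exact div_nonneg (by linarith) h1l.le
      · rw [hμ, div_le_iff₀ h1l]
        have h3 : (1 - lam) / ((K:ℝ) * (1 - α)) = 1 / ((K:ℝ) * (1 - α)) * (1 - lam) := by
          ring
        linarith
    have hC := cvar_le K α x μ hμsum hμb
    have h2 : (1 - lam) * ∑ k, μ k * x k = ∑ k, θ k * x k - lam / K * ∑ k, x k := by
      rw [mul_sum, mul_sum, ← sum_sub_distrib]
      refine sum_congr rfl fun k _ => ?_
      rw [hμ]
      field_simp
    have h5 : (1 - lam) * CVaR K α x ≤ (1 - lam) * ∑ k, μ k * x k :=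
      mul_le_mul_of_nonneg_left hC h1l.le
    have h6 : lam * (1 / (K:ℝ) * ∑ k, x k) = lam / (K:ℝ) * ∑ k, x k := by ring
    rw [riskAdj]
    linarith [h5, h2, h6]

lemma thetaSet_compact (K : ℕ) (α lam : ℝ) : IsCompact (ThetaSet K α lam) := by
  have heq : ThetaSet K α lam = {θ : Fin K → ℝ | (∑ k, θ k) = 1} ∩
      Set.pi Set.univ (fun _ : Fin K =>
        Set.Icc (lam / K) (lam / K + (1 - lam) / (K * (1 - α)))) := by
    ext θ
    simp only [ThetaSet, Set.mem_inter_iff, Set.mem_setOf_eq, Set.mem_pi, Set.mem_univ,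
      Set.mem_Icc, forall_const, true_implies]
  rw [heq]
  exact (isCompact_univ_pi fun _ => isCompact_Icc).inter_left
    (isClosed_eq (continuous_finset_sum _ fun k _ => continuous_apply k) continuous_const)

lemma thetaSet_nonempty (K : ℕ) (hK : 1 ≤ K) (α : ℝ) (hα0 : 0 ≤ α) (hα1 : α < 1)
    (lam : ℝ) (hlam0 : 0 ≤ lam) (hlam1 : lam ≤ 1) :
    (fun _ : Fin K => 1 / (K : ℝ)) ∈ ThetaSet K α lam := by
  have hKpos : (0 : ℝ) < K := by exact_mod_cast by omega
  have h1α : (0 : ℝ) < 1 - α := by linarith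
  constructor
  · rw [sum_const, card_univ, Fintype.card_fin, nsmul_eq_mul]
    field_simp
  · intro _
    constructor
    · exact div_le_div_of_nonneg_right hlam1 hKpos.le
    · have hd : (K : ℝ) * (1 - α) ≤ K := by nlinarith
      have h1 : (1 - lam) / ((K : ℝ)) ≤ (1 - lam) / ((K : ℝ) * (1 - α)) :=
        div_le_div_of_nonneg_left (by linarith) (by positivity) hd
      have h2 : (1 : ℝ) / K = lam / K + (1 - lam) / K := by ring
      linarith

lemma thetaSet_convex (K : ℕ) (α lam : ℝ) : Convex ℝ (ThetaSet K α lam) := by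
  intro θ₁ h₁ θ₂ h₂ a b ha hb hab
  constructor
  · simp only [Pi.add_apply, Pi.smul_apply, smul_eq_mul]
    rw [sum_add_distrib, ← mul_sum, ← mul_sum, h₁.1, h₂.1]
    linarith
  · intro k
    have l1 := h₁.2 k
    have l2 := h₂.2 k
    have elo : lam / (K:ℝ) = a * (lam / K) + b * (lam / K) := by
      linear_combination (lam / (K:ℝ)) * hab.symm
    have ehi : lam / (K:ℝ) + (1 - lam) / (K * (1 - α))
        = a * (lam / K + (1 - lam) / (K * (1 - α)))
          + b * (lam / K + (1 - lam) / (K * (1 - α))) := by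
      linear_combination (lam / (K:ℝ) + (1 - lam) / ((K:ℝ) * (1 - α))) * hab.symm
    constructor <;> simp only [Pi.add_apply, Pi.smul_apply, smul_eq_mul]
    · rw [elo]
      exact add_le_add (mul_le_mul_of_nonneg_left l1.1 ha) (mul_le_mul_of_nonneg_left l2.1 hb)
    · rw [ehi]
      exact add_le_add (mul_le_mul_of_nonneg_left l1.2 ha) (mul_le_mul_of_nonneg_left l2.2 hb)

lemma obj_eq (K : ℕ) (θ d π : Fin K → ℝ) (q p : ℝ) :
    ∑ k, θ k * ((q - d k) * π k) - q * p
      = q * ((∑ k, θ k * π k) - p) + (-∑ k, θ k * π k * d k) := by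
  have h : ∀ k ∈ univ, θ k * ((q - d k) * π k) = q * (θ k * π k) - θ k * π k * d k :=
    fun k _ => by ring
  rw [sum_congr rfl h, sum_sub_distrib, ← mul_sum]
  ring
/-- Strong duality for the load's contracting problem (primal-dual equality (36)):
if the dual feasible set `{θ ∈ Θ | ∑ₖ θ k · π k ≤ p}` is nonempty, the supremum of the
load's objective over `q ≥ 0` equals the attained minimum of `−∑ₖ θ k · π k · d k`
over it; otherwise the load's objective is unbounded above. -/
theorem load_strong_duality (K : ℕ) (hK : 1 ≤ K)
    (α : ℝ) (hα0 : 0 ≤ α) (hα1 : α < 1)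
    (lam : ℝ) (hlam0 : 0 ≤ lam) (hlam1 : lam ≤ 1)
    (d π : Fin K → ℝ) (p : ℝ) :
    ((∃ θ : Fin K → ℝ, (∑ k, θ k) = 1 ∧
        (∀ k, lam / K ≤ θ k ∧ θ k ≤ lam / K + (1 - lam) / (K * (1 - α))) ∧
        (∑ k, θ k * π k) ≤ p) →
      ∃ V : ℝ,
        IsLeast
          {v : ℝ | ∃ θ : Fin K → ℝ, (∑ k, θ k) = 1 ∧
            (∀ k, lam / K ≤ θ k ∧ θ k ≤ lam / K + (1 - lam) / (K * (1 - α))) ∧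
            (∑ k, θ k * π k) ≤ p ∧ v = -∑ k, θ k * π k * d k} V ∧
        IsLUB
          {v : ℝ | ∃ q : ℝ, 0 ≤ q ∧
            v = riskAdj K α lam (fun k => (q - d k) * π k) - q * p} V) ∧
    ((¬ ∃ θ : Fin K → ℝ, (∑ k, θ k) = 1 ∧
        (∀ k, lam / K ≤ θ k ∧ θ k ≤ lam / K + (1 - lam) / (K * (1 - α))) ∧
        (∑ k, θ k * π k) ≤ p) →
      ¬ BddAbove
        {v : ℝ | ∃ q : ℝ, 0 ≤ q ∧
          v = riskAdj K α lam (fun k => (q - d k) * π k) - q * p}) := by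
  have hKpos : (0 : ℝ) < K := by exact_mod_cast by omega
  have h1α : (0 : ℝ) < 1 - α := by linarith
  constructor
  · rintro ⟨θf, hθf1, hθf2, hθf3⟩
    have hθfΘ : θf ∈ ThetaSet K α lam := ⟨hθf1, hθf2⟩
    -- the compact feasible set of the dual
    set F : Set (Fin K → ℝ) := ThetaSet K α lam ∩ {θ | (∑ k, θ k * π k) ≤ p} with hF
    have hFc : IsCompact F := (thetaSet_compact K α lam).inter_right
      (isClosed_le (continuous_finset_sum _ fun k _ =>
        (continuous_apply k).mul continuous_const) continuous_const)
    have hFne : F.Nonempty := ⟨θf, hθfΘ, hθf3⟩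
    have hcontb : Continuous (fun θ : Fin K → ℝ => -∑ k, θ k * π k * d k) :=
      (continuous_finset_sum _ fun k _ =>
        ((continuous_apply k).mul continuous_const).mul continuous_const).neg
    obtain ⟨θs, hθsF, hθsmin'⟩ := hFc.exists_isMinOn hFne hcontb.continuousOn
    have hθsmin := isMinOn_iff.mp hθsmin'
    refine ⟨-∑ k, θs k * π k * d k, ⟨⟨θs, hθsF.1.1, hθsF.1.2, hθsF.2, rfl⟩, ?_⟩, ?_, ?_⟩
    · -- lower bound of the dual-value set
      rintro v ⟨θ, h1, h2, h3, rfl⟩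
      exact hθsmin θ ⟨⟨h1, h2⟩, h3⟩
    · -- upper bound of the primal set
      rintro v ⟨q, hq, rfl⟩
      have hra := riskAdj_le K hK α hα0 hα1 lam hlam0 hlam1
        (fun k => (q - d k) * π k) θs hθsF.1
      have heq := obj_eq K θs d π q p
      have hθs2 : (∑ k, θs k * π k) ≤ p := hθsF.2
      have h4 : q * ((∑ k, θs k * π k) - p) ≤ 0 :=
        mul_nonpos_of_nonneg_of_nonpos hq (by linarith)
      linarith
    · -- least upper bound
      intro B hB
      by_contra hVB
      push_neg at hVB
      -- separation of the image of Θ from the "feasible corner"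
      set C : Set (ℝ × ℝ) := (fun θ : Fin K → ℝ =>
        ((∑ k, θ k * π k) - p, -∑ k, θ k * π k * d k)) '' ThetaSet K α lam with hC
      have hCcomp : IsCompact C := (thetaSet_compact K α lam).image (by fun_prop)
      have hsum_combo : ∀ (g θ₁ θ₂ : Fin K → ℝ) (a b : ℝ),
          ∑ k, (a • θ₁ + b • θ₂) k * g k
            = a * ∑ k, θ₁ k * g k + b * ∑ k, θ₂ k * g k := by
        intro g θ₁ θ₂ a b
        simp only [Pi.add_apply, Pi.smul_apply, smul_eq_mul]
        rw [mul_sum, mul_sum, ← sum_add_distrib]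
        exact sum_congr rfl fun k _ => by ring
      have hCconv : Convex ℝ C := by
        rintro _ ⟨θ₁, h₁, rfl⟩ _ ⟨θ₂, h₂, rfl⟩ a b ha hb hab
        refine ⟨a • θ₁ + b • θ₂, thetaSet_convex K α lam h₁ h₂ ha hb hab, ?_⟩
        have e1 := hsum_combo π θ₁ θ₂ a b
        have e2 := hsum_combo (fun k => π k * d k) θ₁ θ₂ a b
        have hassoc : ∀ θ : Fin K → ℝ, ∑ k, θ k * π k * d k = ∑ k, θ k * (π k * d k) :=
          fun θ => sum_congr rfl fun k _ => by ring
        have e2' : ∑ k, (a • θ₁ + b • θ₂) k * π k * d k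
            = a * ∑ k, θ₁ k * π k * d k + b * ∑ k, θ₂ k * π k * d k := by
          rw [hassoc (a • θ₁ + b • θ₂), hassoc θ₁, hassoc θ₂]
          exact e2
        simp only [Prod.ext_iff, Prod.fst_add, Prod.snd_add, Prod.smul_fst, Prod.smul_snd,
          smul_eq_mul]
        constructor
        · rw [e1]; linear_combination (-p) * hab.symm
        · rw [e2']; ring
      set Dset : Set (ℝ × ℝ) := Set.Iic (0 : ℝ) ×ˢ Set.Iic B with hDset
      have hDconv : Convex ℝ Dset := (convex_Iic (0 : ℝ)).prod (convex_Iic B)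
      have hDclosed : IsClosed Dset := isClosed_Iic.prod isClosed_Iic
      have hdisj : Disjoint C Dset := by
        rw [Set.disjoint_left]
        rintro z ⟨θ, hθ, rfl⟩ hzD
        obtain ⟨hz1, hz2⟩ := hzD
        simp only [Set.mem_Iic] at hz1 hz2
        have hfeas : θ ∈ F := ⟨hθ, show (∑ k, θ k * π k) ≤ p by linarith⟩
        have h5 := hθsmin θ hfeas
        linarith
      obtain ⟨f, u, v, hCu, huv, hDv⟩ :=
        geometric_hahn_banach_compact_closed hCconv hCcomp hDconv hDclosed hdisj
      set u₀ := f (1, 0) with hu₀def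
      set v₀ := f (0, 1) with hv₀def
      have hlin : ∀ s t : ℝ, f (s, t) = s * u₀ + t * v₀ := by
        intro s t
        have hst : ((s, t) : ℝ × ℝ) = s • ((1 : ℝ), (0 : ℝ)) + t • ((0 : ℝ), (1 : ℝ)) := by
          simp [Prod.ext_iff]
        rw [hst, map_add, map_smul, map_smul, smul_eq_mul, smul_eq_mul]
      have hu₀ : u₀ ≤ 0 := by
        by_contra h
        push_neg at h
        have hpt : ((min 0 ((v - B * v₀) / u₀ - 1), B) : ℝ × ℝ) ∈ Dset :=
          ⟨Set.mem_Iic.mpr (min_le_left _ _), Set.mem_Iic.mpr le_rfl⟩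
        have h2 := hDv _ hpt
        rw [hlin] at h2
        have h3 : min 0 ((v - B * v₀) / u₀ - 1) ≤ (v - B * v₀) / u₀ - 1 := min_le_right _ _
        have h4 : min 0 ((v - B * v₀) / u₀ - 1) * u₀ ≤ ((v - B * v₀) / u₀ - 1) * u₀ :=
          mul_le_mul_of_nonneg_right h3 h.le
        have h5 : ((v - B * v₀) / u₀ - 1) * u₀ = v - B * v₀ - u₀ := by
          field_simp
        linarith
      have hBv : v < B * v₀ := by
        have h2 := hDv (0, B) ⟨Set.mem_Iic.mpr le_rfl, Set.mem_Iic.mpr le_rfl⟩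
        rw [hlin] at h2
        linarith
      have hv₀ : v₀ < 0 := by
        by_contra h
        push_neg at h
        rcases eq_or_lt_of_le h with h0 | h0
        · have hv0 : v < 0 := by rw [← h0, mul_zero] at hBv; exact hBv
          have hmem : ((∑ k, θf k * π k) - p, -∑ k, θf k * π k * d k) ∈ C :=
            ⟨θf, hθfΘ, rfl⟩
          have h6 := hCu _ hmem
          rw [hlin, ← h0, mul_zero, add_zero] at h6
          nlinarith [hθf3, hu₀]
        · have hpt : (((0 : ℝ), min B ((v - 1) / v₀)) : ℝ × ℝ) ∈ Dset :=
            ⟨Set.mem_Iic.mpr le_rfl, Set.mem_Iic.mpr (min_le_left _ _)⟩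
          have h2 := hDv _ hpt
          rw [hlin] at h2
          have h3 : min B ((v - 1) / v₀) * v₀ ≤ ((v - 1) / v₀) * v₀ :=
            mul_le_mul_of_nonneg_right (min_le_right _ _) h0.le
          have h4 : ((v - 1) / v₀) * v₀ = v - 1 := by field_simp
          linarith
      set q := u₀ / v₀ with hqdef
      have hq : 0 ≤ q := by
        rw [hqdef, div_nonneg_iff]
        right
        exact ⟨hu₀, hv₀.le⟩
      have hqv : q * v₀ = u₀ := div_mul_cancel₀ _ (ne_of_lt hv₀)
      obtain ⟨θ₀, hθ₀Θ, hθ₀val⟩ := riskAdj_attained K hK α hα0 hα1 lam hlam0 hlam1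
        (fun k => (q - d k) * π k)
      have hmem : ((∑ k, θ₀ k * π k) - p, -∑ k, θ₀ k * π k * d k) ∈ C := ⟨θ₀, hθ₀Θ, rfl⟩
      have h6 := hCu _ hmem
      rw [hlin] at h6
      have h7 : q * ((∑ k, θ₀ k * π k) - p) * v₀ = ((∑ k, θ₀ k * π k) - p) * u₀ := by
        rw [← hqv]; ring
      have hgt : B < q * ((∑ k, θ₀ k * π k) - p) + (-∑ k, θ₀ k * π k * d k) := by
        nlinarith [h6, hBv, huv, h7, hv₀]
      have hel : riskAdj K α lam (fun k => (q - d k) * π k) - q * p ∈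
          {v : ℝ | ∃ q : ℝ, 0 ≤ q ∧
            v = riskAdj K α lam (fun k => (q - d k) * π k) - q * p} := ⟨q, hq, rfl⟩
      have hle := hB hel
      have hval : riskAdj K α lam (fun k => (q - d k) * π k) - q * p
          = q * ((∑ k, θ₀ k * π k) - p) + (-∑ k, θ₀ k * π k * d k) := by
        rw [hθ₀val]
        exact obj_eq K θ₀ d π q p
      linarith
  · intro hinfeas hBdd
    obtain ⟨B, hB⟩ := hBdd
    have hΘc := thetaSet_compact K α lam
    have hΘne : (ThetaSet K α lam).Nonempty :=
      ⟨_, thetaSet_nonempty K hK α hα0 hα1 lam hlam0 hlam1⟩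
    obtain ⟨θa, hθaΘ, hθamin'⟩ := hΘc.exists_isMinOn hΘne
      ((continuous_finset_sum _ fun k _ =>
        (continuous_apply k).mul continuous_const).continuousOn :
        ContinuousOn (fun θ : Fin K → ℝ => ∑ k, θ k * π k) _)
    have hθamin := isMinOn_iff.mp hθamin'
    obtain ⟨θb, hθbΘ, hθbmin'⟩ := hΘc.exists_isMinOn hΘne
      (((continuous_finset_sum _ fun k _ =>
        ((continuous_apply k).mul continuous_const).mul continuous_const).neg).continuousOn :
        ContinuousOn (fun θ : Fin K → ℝ => -∑ k, θ k * π k * d k) _)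
    have hθbmin := isMinOn_iff.mp hθbmin'
    set δ := (∑ k, θa k * π k) - p with hδdef
    have hδ : 0 < δ := by
      have h1 : ¬ (∑ k, θa k * π k) ≤ p := fun h => hinfeas ⟨θa, hθaΘ.1, hθaΘ.2, h⟩
      push_neg at h1
      rw [hδdef]; linarith
    set m := -∑ k, θb k * π k * d k with hmdef
    set q := max 0 ((B - m + 1) / δ) with hqdef
    have hq : 0 ≤ q := le_max_left _ _
    obtain ⟨θ₀, hθ₀Θ, hθ₀val⟩ := riskAdj_attained K hK α hα0 hα1 lam hlam0 hlam1
      (fun k => (q - d k) * π k)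
    have hel : riskAdj K α lam (fun k => (q - d k) * π k) - q * p ∈
        {v : ℝ | ∃ q : ℝ, 0 ≤ q ∧
          v = riskAdj K α lam (fun k => (q - d k) * π k) - q * p} := ⟨q, hq, rfl⟩
    have hle := hB hel
    have hval : riskAdj K α lam (fun k => (q - d k) * π k) - q * p
        = q * ((∑ k, θ₀ k * π k) - p) + (-∑ k, θ₀ k * π k * d k) := by
      rw [hθ₀val]
      exact obj_eq K θ₀ d π q p
    have h1 : δ ≤ (∑ k, θ₀ k * π k) - p := by
      have := hθamin θ₀ hθ₀Θ
      rw [hδdef]; simp only [Pi.mul_apply] at this; linarith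
    have h2 : m ≤ -∑ k, θ₀ k * π k * d k := hθbmin θ₀ hθ₀Θ
    have h3 : q * δ ≤ q * ((∑ k, θ₀ k * π k) - p) := mul_le_mul_of_nonneg_left h1 hq
    have h4 : (B - m + 1) / δ ≤ q := le_max_right _ _
    have h5 : (B - m + 1) = ((B - m + 1) / δ) * δ := by field_simp
    have h6 : ((B - m + 1) / δ) * δ ≤ q * δ := mul_le_mul_of_nonneg_right h4 hδ.le
    clear_value q δ m
    linarith
end
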